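/- arXiv:1303.2412 — 10 statements merged into one kernel-verified Lean document; each statement's English description precedes it below -/
import Mathlib

section
/- Let n ≥ 2 be an integer and let f : [0,1] → ℝ be continuous and differentiable with derivative f′ of finite total variation Var(f′) on [0,1]. With nodes x_i = (i−1)/(n−1) for i = 1,…,n, let T_n(f) = (1/(2(n−1)))[f(x_1) + 2f(x_2) + ⋯ + 2f(x_{n−1}) + f(x_n)] be the composite trapezoidal rule. Then |∫₀¹ f(x) dx − T_n(f)| ≤ Var(f′)/(8(n−1)²). -/
open MeasureTheory Set intervalIntegral

private lemma trap_bv_integrableOn {f' : ℝ → ℝ}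
    (hbv : BoundedVariationOn f' (Icc 0 1)) :
    IntegrableOn f' (Icc (0:ℝ) 1) := by
  obtain ⟨p, q, hp, hq, hpq⟩ :=
    hbv.locallyBoundedVariationOn.exists_monotoneOn_sub_monotoneOn
  rw [hpq]
  exact (hp.integrableOn_isCompact isCompact_Icc).sub
    (hq.integrableOn_isCompact isCompact_Icc)

private lemma trap_bv_intervalIntegrable {f' : ℝ → ℝ}
    (hbv : BoundedVariationOn f' (Icc 0 1)) {u v : ℝ}
    (hu : 0 ≤ u) (huv : u ≤ v) (hv : v ≤ 1) :
    IntervalIntegrable f' volume u v := by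
  rw [intervalIntegrable_iff_integrableOn_Icc_of_le huv]
  exact (trap_bv_integrableOn hbv).mono_set (Icc_subset_Icc hu hv)

private lemma trap_eVar_add (f' : ℝ → ℝ) {a b c : ℝ} (hab : a ≤ b) (hbc : b ≤ c) :
    eVariationOn f' (Icc a b) + eVariationOn f' (Icc b c) = eVariationOn f' (Icc a c) := by
  have h := eVariationOn.Icc_add_Icc f' (s := Icc a c) hab hbc ⟨hab, hbc⟩
  rwa [inter_eq_self_of_subset_right (Icc_subset_Icc le_rfl hbc),
    inter_eq_self_of_subset_right (Icc_subset_Icc hab le_rfl),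
    inter_self] at h

private lemma trap_abs_sub_le {f' : ℝ → ℝ} {s : Set ℝ}
    (hfin : eVariationOn f' s ≠ ⊤) {x y : ℝ} (hx : x ∈ s) (hy : y ∈ s) :
    |f' x - f' y| ≤ (eVariationOn f' s).toReal := by
  have h := eVariationOn.edist_le f' hx hy
  rw [edist_dist] at h
  have := ENNReal.toReal_mono hfin h
  rwa [ENNReal.toReal_ofReal dist_nonneg, Real.dist_eq] at this

private lemma trap_interval {f f' : ℝ → ℝ}
    (hf : ContinuousOn f (Icc 0 1))
    (hderiv : ∀ x ∈ Icc (0:ℝ) 1, HasDerivWithinAt f (f' x) (Icc 0 1) x)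
    (hbv : BoundedVariationOn f' (Icc 0 1))
    {a b : ℝ} (ha : 0 ≤ a) (hab : a ≤ b) (hb : b ≤ 1) :
    |(∫ x in a..b, f x) - (b - a) * (f a + f b) / 2|
      ≤ (b - a) ^ 2 / 8 * (eVariationOn f' (Icc a b)).toReal := by
  set m := (a + b) / 2 with hm
  have ham : a ≤ m := by rw [hm]; linarith
  have hmb : m ≤ b := by rw [hm]; linarith
  have hm0 : 0 ≤ m := le_trans ha ham
  have hm1 : m ≤ 1 := le_trans hmb hb
  have hsub : Icc a b ⊆ Icc (0:ℝ) 1 := Icc_subset_Icc ha hb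
  -- integrability helpers
  have hfint : ∀ u v : ℝ, a ≤ u → u ≤ v → v ≤ b → IntervalIntegrable f volume u v := by
    intro u v h1 h2 h3
    apply ContinuousOn.intervalIntegrable
    apply hf.mono
    rw [uIcc_of_le h2]
    exact Icc_subset_Icc (le_trans ha h1) (le_trans h3 hb)
  have hf'int : ∀ u v : ℝ, a ≤ u → u ≤ v → v ≤ b → IntervalIntegrable f' volume u v :=
    fun u v h1 h2 h3 =>
      trap_bv_intervalIntegrable hbv (le_trans ha h1) h2 (le_trans h3 hb)
  -- weighted integrands are integrable
  have hwint : ∀ (c : ℝ) (u v : ℝ), a ≤ u → u ≤ v → v ≤ b →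
      IntervalIntegrable (fun x => (m - x) * (f' x - c)) volume u v := by
    intro c u v h1 h2 h3
    exact IntervalIntegrable.continuousOn_mul
      ((hf'int u v h1 h2 h3).sub intervalIntegrable_const)
      ((continuous_const.sub continuous_id).continuousOn)
  -- FTC identity
  have hderivAt : ∀ x ∈ Ioo a b, HasDerivAt f (f' x) x := by
    intro x hx
    exact (hderiv x (hsub (Ioo_subset_Icc_self hx))).hasDerivAt
      (Icc_mem_nhds (lt_of_le_of_lt ha hx.1) (lt_of_lt_of_le hx.2 hb))
  have hcont : ContinuousOn (fun x => (x - m) * f x) (Icc a b) :=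
    ((continuous_id.sub continuous_const).continuousOn).mul (hf.mono hsub)
  have hder : ∀ x ∈ Ioo a b,
      HasDerivWithinAt (fun y => (y - m) * f y) (f x + (x - m) * f' x) (Ioi x) x := by
    intro x hx
    have h1 : HasDerivAt (fun y => (y - m) * f y) (1 * f x + (x - m) * f' x) x :=
      ((hasDerivAt_id x).sub_const m).mul (hderivAt x hx)
    rw [one_mul] at h1
    exact h1.hasDerivWithinAt
  have hintg : IntervalIntegrable (fun x => f x + (x - m) * f' x) volume a b := by
    apply (hfint a b le_rfl hab le_rfl).add
    exact IntervalIntegrable.continuousOn_mul (hf'int a b le_rfl hab le_rfl)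
      ((continuous_id.sub continuous_const).continuousOn)
  have key : ∫ x in a..b, (f x + (x - m) * f' x)
      = (b - m) * f b - (a - m) * f a :=
    integral_eq_sub_of_hasDeriv_right_of_le hab hcont hder hintg
  have hsplitint : ∫ x in a..b, (f x + (x - m) * f' x)
      = (∫ x in a..b, f x) + ∫ x in a..b, (x - m) * f' x :=
    integral_add (hfint a b le_rfl hab le_rfl)
      (IntervalIntegrable.continuousOn_mul (hf'int a b le_rfl hab le_rfl)
        ((continuous_id.sub continuous_const).continuousOn))
  -- Error as kernel integral against (f' - f' m)
  have hzero : ∫ x in a..b, (m - x) * f' m = 0 := by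
    have : ∫ x in a..b, (m - x) * f' m
        = (∫ x in a..b, (m - x)) * f' m := by
      rw [← intervalIntegral.integral_mul_const]
    rw [this, integral_sub intervalIntegrable_const intervalIntegrable_id,
      intervalIntegral.integral_const, integral_id]
    simp only [smul_eq_mul]
    rw [hm]; ring
  have hEker : (∫ x in a..b, f x) - (b - a) * (f a + f b) / 2
      = ∫ x in a..b, (m - x) * (f' x - f' m) := by
    have e1 : ∫ x in a..b, (m - x) * (f' x - f' m)
        = (∫ x in a..b, ((m - x) * f' x - (m - x) * f' m)) := by
      congr 1; funext x; ring
    have e2 : ∫ x in a..b, ((m - x) * f' x - (m - x) * f' m)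
        = (∫ x in a..b, (m - x) * f' x) - ∫ x in a..b, (m - x) * f' m := by
      apply intervalIntegral.integral_sub
      · exact IntervalIntegrable.continuousOn_mul (hf'int a b le_rfl hab le_rfl)
          ((continuous_const.sub continuous_id).continuousOn)
      · exact (ContinuousOn.intervalIntegrable (by fun_prop))
    have e3 : ∫ x in a..b, (m - x) * f' x = - ∫ x in a..b, (x - m) * f' x := by
      rw [← intervalIntegral.integral_neg]; congr 1; funext x; ring
    have e4 : (∫ x in a..b, f x)
        = (b - m) * f b - (a - m) * f a - ∫ x in a..b, (x - m) * f' x := by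
      rw [← key, hsplitint]; ring
    rw [e1, e2, e3, hzero, e4, hm]; ring
  -- split at midpoint
  have hker_split : ∫ x in a..b, (m - x) * (f' x - f' m)
      = (∫ x in a..m, (m - x) * (f' x - f' m))
        + ∫ x in m..b, (m - x) * (f' x - f' m) :=
    (integral_add_adjacent_intervals (hwint _ a m le_rfl ham hmb)
      (hwint _ m b ham hmb le_rfl)).symm
  -- variation pieces
  have hfin1 : eVariationOn f' (Icc a m) ≠ ⊤ :=
    hbv.mono (Icc_subset_Icc ha hm1)
  have hfin2 : eVariationOn f' (Icc m b) ≠ ⊤ :=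
    hbv.mono (Icc_subset_Icc hm0 hb)
  set V1 := (eVariationOn f' (Icc a m)).toReal with hV1
  set V2 := (eVariationOn f' (Icc m b)).toReal with hV2
  have hV1nn : 0 ≤ V1 := ENNReal.toReal_nonneg
  have hV2nn : 0 ≤ V2 := ENNReal.toReal_nonneg
  -- bound first half
  have hb1 : |∫ x in a..m, (m - x) * (f' x - f' m)| ≤ (b - a) ^ 2 / 8 * V1 := by
    calc |∫ x in a..m, (m - x) * (f' x - f' m)|
        ≤ ∫ x in a..m, |(m - x) * (f' x - f' m)| :=
          abs_integral_le_integral_abs ham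
      _ ≤ ∫ x in a..m, (m - x) * V1 := by
          apply integral_mono_on ham ((hwint _ a m le_rfl ham hmb).abs)
            (ContinuousOn.intervalIntegrable (by fun_prop))
          intro x hx
          rw [abs_mul, abs_of_nonneg (by linarith [hx.2] : (0:ℝ) ≤ m - x)]
          apply mul_le_mul_of_nonneg_left _ (by linarith [hx.2])
          exact trap_abs_sub_le hfin1 hx (right_mem_Icc.2 ham)
      _ = (∫ x in a..m, (m - x)) * V1 := by
          rw [← intervalIntegral.integral_mul_const]
      _ = (b - a) ^ 2 / 8 * V1 := by
          rw [integral_sub intervalIntegrable_const intervalIntegrable_id,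
            intervalIntegral.integral_const, integral_id]
          simp only [smul_eq_mul]
          rw [hm]; ring
  have hb2 : |∫ x in m..b, (m - x) * (f' x - f' m)| ≤ (b - a) ^ 2 / 8 * V2 := by
    calc |∫ x in m..b, (m - x) * (f' x - f' m)|
        ≤ ∫ x in m..b, |(m - x) * (f' x - f' m)| :=
          abs_integral_le_integral_abs hmb
      _ ≤ ∫ x in m..b, (x - m) * V2 := by
          apply integral_mono_on hmb ((hwint _ m b ham hmb le_rfl).abs)
            (ContinuousOn.intervalIntegrable (by fun_prop))
          intro x hx
          rw [abs_mul, abs_sub_comm, abs_of_nonneg (by linarith [hx.1] : (0:ℝ) ≤ x - m)]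
          apply mul_le_mul_of_nonneg_left _ (by linarith [hx.1])
          exact trap_abs_sub_le hfin2 hx (left_mem_Icc.2 hmb)
      _ = (∫ x in m..b, (x - m)) * V2 := by
          rw [← intervalIntegral.integral_mul_const]
      _ = (b - a) ^ 2 / 8 * V2 := by
          rw [integral_sub intervalIntegrable_id intervalIntegrable_const,
            intervalIntegral.integral_const, integral_id]
          simp only [smul_eq_mul]
          rw [hm]; ring
  -- add up variations
  have hVadd : V1 + V2 = (eVariationOn f' (Icc a b)).toReal := by
    rw [hV1, hV2, ← ENNReal.toReal_add hfin1 hfin2, trap_eVar_add f' ham hmb]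
  rw [hEker, hker_split]
  calc |(∫ x in a..m, (m - x) * (f' x - f' m))
        + ∫ x in m..b, (m - x) * (f' x - f' m)|
      ≤ |∫ x in a..m, (m - x) * (f' x - f' m)|
        + |∫ x in m..b, (m - x) * (f' x - f' m)| := abs_add_le _ _
    _ ≤ (b - a) ^ 2 / 8 * V1 + (b - a) ^ 2 / 8 * V2 := add_le_add hb1 hb2
    _ = (b - a) ^ 2 / 8 * (eVariationOn f' (Icc a b)).toReal := by
        rw [← hVadd]; ring

private lemma trap_sum_var (f' : ℝ → ℝ) {N : ℕ} (hN : 1 ≤ N) (k : ℕ) (hk : k ≤ N) :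
    ∑ i ∈ Finset.range k,
        eVariationOn f' (Icc ((i : ℝ) / N) (((i : ℝ) + 1) / N))
      = eVariationOn f' (Icc 0 ((k : ℝ) / N)) := by
  have hc : (0:ℝ) < N := by exact_mod_cast hN
  induction k with
  | zero =>
      simp only [Finset.range_zero, Finset.sum_empty, Nat.cast_zero, zero_div, Icc_self]
      exact (eVariationOn.subsingleton f' (subsingleton_singleton)).symm
  | succ k ih =>
      rw [Finset.sum_range_succ, ih (by omega)]
      have h1 : (0:ℝ) ≤ (k : ℝ) / N := by positivity
      have h2 : (k : ℝ) / N ≤ ((k : ℝ) + 1) / N :=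
        (div_le_div_iff_of_pos_right hc).2 (by linarith)
      push_cast
      rw [trap_eVar_add f' h1 h2]

/-- Error bound for the composite trapezoidal rule on `[0,1]` with `n` equally spaced
nodes `x_i = (i-1)/(n-1)` (here indexed from `0`):
`|∫₀¹ f − T_n(f)| ≤ Var(f′) / (8 (n−1)²)`. -/
theorem trapezoid_error
    (n : ℕ) (hn : 2 ≤ n) (f f' : ℝ → ℝ)
    (hf : ContinuousOn f (Icc 0 1))
    (hderiv : ∀ x ∈ Icc (0:ℝ) 1, HasDerivWithinAt f (f' x) (Icc 0 1) x)
    (hbv : BoundedVariationOn f' (Icc 0 1)) :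
    |(∫ x in (0:ℝ)..1, f x) -
        (∑ i ∈ Finset.range (n - 1),
          (f ((i : ℝ) / ((n : ℝ) - 1)) + f (((i : ℝ) + 1) / ((n : ℝ) - 1))))
          / (2 * ((n : ℝ) - 1))|
      ≤ (eVariationOn f' (Icc 0 1)).toReal / (8 * ((n : ℝ) - 1) ^ 2) := by
  set N := n - 1 with hNdef
  have hN1 : 1 ≤ N := by omega
  have hcast : (n : ℝ) - 1 = (N : ℝ) := by
    rw [hNdef]
    push_cast [Nat.cast_sub (by omega : 1 ≤ n)]
    ring
  rw [hcast]
  have hc : (0:ℝ) < (N:ℝ) := by exact_mod_cast hN1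
  set a : ℕ → ℝ := fun i => (i : ℝ) / (N : ℝ) with ha
  have hmono : ∀ i j : ℕ, i ≤ j → a i ≤ a j := by
    intro i j hij
    exact (div_le_div_iff_of_pos_right hc).2 (by exact_mod_cast hij)
  have hmem : ∀ i : ℕ, i ≤ N → a i ∈ Icc (0:ℝ) 1 := by
    intro i hi
    constructor
    · positivity
    · rw [ha]
      simp only
      rw [div_le_one hc]
      exact_mod_cast hi
  have hfint : ∀ i, i < N → IntervalIntegrable f volume (a i) (a (i+1)) := by
    intro i hi
    apply ContinuousOn.intervalIntegrable
    apply hf.mono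
    rw [uIcc_of_le (hmono i (i+1) (by omega))]
    exact Icc_subset_Icc (hmem i (by omega)).1 (hmem (i+1) (by omega)).2
  have hsplit : (∫ x in (0:ℝ)..1, f x) = ∑ i ∈ Finset.range N, ∫ x in a i..a (i+1), f x := by
    rw [sum_integral_adjacent_intervals hfint]
    have h0 : a 0 = 0 := by simp [ha]
    have h1 : a N = 1 := by
      rw [ha]; simp only; rw [div_self hc.ne']
    rw [h0, h1]
  have hVfin : ∀ i : ℕ, i ≤ N → ∀ j : ℕ, j ≤ N → eVariationOn f' (Icc (a i) (a j)) ≠ ⊤ := by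
    intro i hi j hj
    exact hbv.mono (Icc_subset_Icc (hmem i hi).1 (hmem j hj).2)
  have hE : ∀ i, i < N → |(∫ x in a i..a (i+1), f x) - (f (a i) + f (a (i+1))) / (2 * (N:ℝ))|
      ≤ (eVariationOn f' (Icc (a i) (a (i+1)))).toReal / (8 * (N:ℝ)^2) := by
    intro i hi
    have h := trap_interval hf hderiv hbv (hmem i (by omega)).1
      (hmono i (i+1) (by omega)) (hmem (i+1) (by omega)).2
    have hd : a (i+1) - a i = 1 / (N:ℝ) := by
      rw [ha]; push_cast; field_simp; ring
    rw [hd] at h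
    have heq : (1 / (N:ℝ)) * (f (a i) + f (a (i+1))) / 2
        = (f (a i) + f (a (i+1))) / (2 * (N:ℝ)) := by
      rw [div_mul_eq_mul_div, one_mul, div_div, mul_comm (N:ℝ) 2]
    rw [heq] at h
    refine h.trans (le_of_eq ?_)
    rw [div_pow, one_pow, div_div, one_div_mul_eq_div, mul_comm ((N:ℝ)^2) 8]
  have hgoal_sum : (∑ i ∈ Finset.range N,
        (f ((i : ℝ) / ((N:ℕ) : ℝ)) + f (((i : ℝ) + 1) / ((N:ℕ) : ℝ)))) / (2 * ((N:ℕ):ℝ))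
      = ∑ i ∈ Finset.range N, (f (a i) + f (a (i+1))) / (2 * (N:ℝ)) := by
    rw [Finset.sum_div]
    apply Finset.sum_congr rfl
    intro i _
    rw [ha]
    push_cast
    ring_nf
  rw [hsplit, hgoal_sum, ← Finset.sum_sub_distrib]
  calc |∑ i ∈ Finset.range N,
        ((∫ x in a i..a (i+1), f x) - (f (a i) + f (a (i+1))) / (2 * (N:ℝ)))|
      ≤ ∑ i ∈ Finset.range N,
        |(∫ x in a i..a (i+1), f x) - (f (a i) + f (a (i+1))) / (2 * (N:ℝ))| :=
        Finset.abs_sum_le_sum_abs _ _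
    _ ≤ ∑ i ∈ Finset.range N,
        (eVariationOn f' (Icc (a i) (a (i+1)))).toReal / (8 * (N:ℝ)^2) :=
        Finset.sum_le_sum fun i hi => hE i (Finset.mem_range.1 hi)
    _ = (∑ i ∈ Finset.range N,
        (eVariationOn f' (Icc (a i) (a (i+1)))).toReal) / (8 * (N:ℝ)^2) := by
        rw [Finset.sum_div]
    _ = (eVariationOn f' (Icc 0 1)).toReal / (8 * (N:ℝ)^2) := by
        congr 1
        rw [← ENNReal.toReal_sum (fun i hi =>
          hVfin i (by have := Finset.mem_range.1 hi; omega) (i+1)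
            (by have := Finset.mem_range.1 hi; omega))]
        congr 1
        have hs := trap_sum_var f' hN1 N le_rfl
        rw [div_self hc.ne'] at hs
        rw [← hs]
        apply Finset.sum_congr rfl
        intro i _
        have h1 : ((i:ℝ) + 1) / ((N:ℕ):ℝ) = a (i+1) := by
          rw [ha]; push_cast; ring
        rw [← h1]
end

section
/- Let n ≥ 3 be an integer, let x_i = (i−1)/(n−1) for i = 1,…,n, and let f : [0,1] → ℝ be continuous and differentiable with derivative f′ of finite total variation on [0,1]. Define F_n(f) = (n−1) Σ_{i=1}^{n−2} |f(x_i) − 2f(x_{i+1}) + f(x_{i+2})|. Then F_n(f) ≤ Var(f′); that is, the total variation of the derivative of the linear spline interpolant never overestimates Var(f′). -/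
open MeasureTheory Set

/-- The total variation of the derivative of the linear spline interpolant,
`F_n(f) = (n−1) Σ_{i=1}^{n−2} |f(x_i) − 2f(x_{i+1}) + f(x_{i+2})|`,
never overestimates `Var(f′)`. -/
theorem Fn_never_overestimates_var
    (n : ℕ) (hn : 3 ≤ n) (f f' : ℝ → ℝ)
    (hf : ContinuousOn f (Icc 0 1))
    (hderiv : ∀ x ∈ Icc (0:ℝ) 1, HasDerivWithinAt f (f' x) (Icc 0 1) x)
    (hbv : BoundedVariationOn f' (Icc 0 1)) :
    ((n : ℝ) - 1) *
        ∑ i ∈ Finset.range (n - 2),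
          |f ((i : ℝ) / ((n : ℝ) - 1)) - 2 * f (((i : ℝ) + 1) / ((n : ℝ) - 1))
            + f (((i : ℝ) + 2) / ((n : ℝ) - 1))|
      ≤ (eVariationOn f' (Icc 0 1)).toReal := by
  set d : ℝ := (n : ℝ) - 1 with hd
  have hd2 : (2:ℝ) ≤ d := by
    have : (3:ℝ) ≤ (n:ℝ) := by exact_mod_cast hn
    simp only [hd]; linarith
  have hdpos : (0:ℝ) < d := by linarith
  set c : ℕ → ℝ := fun i => (i : ℝ) / d with hc
  have hcmem : ∀ i : ℕ, i ≤ n - 1 → c i ∈ Icc (0:ℝ) 1 := by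
    intro i hi
    have hi' : (i : ℝ) ≤ d := by
      have h0 : (i : ℝ) ≤ ((n - 1 : ℕ) : ℝ) := by exact_mod_cast hi
      have h1 : ((n - 1 : ℕ) : ℝ) = (n:ℝ) - 1 := by
        have h2 : 1 ≤ n := by omega
        push_cast [h2]; ring
      rw [h1] at h0; simp only [hd]; linarith
    refine ⟨by positivity, ?_⟩
    simp only [hc]
    exact (div_le_one hdpos).2 hi'
  have hclt : ∀ i : ℕ, c i < c (i+1) := by
    intro i
    simp only [hc]
    have h : (i : ℝ) < ((i+1 : ℕ) : ℝ) := by push_cast; linarith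
    exact div_lt_div_of_pos_right h hdpos
  have hcmono : Monotone c := monotone_nat_of_le_succ fun i => (hclt i).le
  -- Mean value theorem on each subinterval
  have key : ∀ i : ℕ, i < n - 1 →
      ∃ y, y ∈ Ioo (c i) (c (i+1)) ∧ f' y = d * (f (c (i+1)) - f (c i)) := by
    intro i hi
    have hmem1 : c i ∈ Icc (0:ℝ) 1 := hcmem i (by omega)
    have hmem2 : c (i+1) ∈ Icc (0:ℝ) 1 := hcmem (i+1) (by omega)
    have hsub : Icc (c i) (c (i+1)) ⊆ Icc (0:ℝ) 1 :=
      Icc_subset_Icc hmem1.1 hmem2.2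
    have hcont : ContinuousOn f (Icc (c i) (c (i+1))) := hf.mono hsub
    have hder : ∀ x ∈ Ioo (c i) (c (i+1)), HasDerivAt f (f' x) x := by
      intro x hx
      have hx1 : x ∈ Ioo (0:ℝ) 1 := ⟨lt_of_le_of_lt hmem1.1 hx.1, lt_of_lt_of_le hx.2 hmem2.2⟩
      exact (hderiv x (Ioo_subset_Icc_self hx1)).hasDerivAt
        (Icc_mem_nhds hx1.1 hx1.2)
    obtain ⟨y, hy, hy'⟩ := exists_hasDerivAt_eq_slope f f' (hclt i) hcont hder
    refine ⟨y, hy, ?_⟩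
    have hdiff : c (i+1) - c i = 1 / d := by
      simp only [hc]; push_cast; field_simp; ring
    rw [hy', hdiff]
    field_simp
  choose! η hη1 hη2 using key
  -- extend to a monotone sequence
  set u : ℕ → ℝ := fun i => η (min i (n-2)) with hu
  have hηlt : ∀ k m : ℕ, k < m → m ≤ n - 2 → η k < η m := by
    intro k m hkm hm
    have h1 : η k < c (k+1) := (hη1 k (by omega)).2
    have h2 : c m < η m := (hη1 m (by omega)).1
    exact lt_of_lt_of_le h1 (le_trans (hcmono hkm) h2.le) |>.trans_le le_rfl
  have humono : Monotone u := by
    apply monotone_nat_of_le_succ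
    intro i
    simp only [hu]
    rcases le_or_gt (i+1) (n-2) with h | h
    · have h1 : min i (n-2) = i := min_eq_left (by omega)
      have h2 : min (i+1) (n-2) = i+1 := min_eq_left h
      rw [h1, h2]
      exact (hηlt i (i+1) (by omega) h).le
    · have h1 : min i (n-2) = n-2 := min_eq_right (by omega)
      have h2 : min (i+1) (n-2) = n-2 := min_eq_right (by omega)
      rw [h1, h2]
  have humem : ∀ i : ℕ, u i ∈ Icc (0:ℝ) 1 := by
    intro i
    set k := min i (n-2) with hk
    have hk2 : k < n - 1 := by omega
    have h1 := hη1 k hk2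
    have hm1 : c k ∈ Icc (0:ℝ) 1 := hcmem k (by omega)
    have hm2 : c (k+1) ∈ Icc (0:ℝ) 1 := hcmem (k+1) (by omega)
    exact ⟨le_trans hm1.1 h1.1.le, le_trans h1.2.le hm2.2⟩
  -- the second difference identity
  have hmain : ((n : ℝ) - 1) *
        ∑ i ∈ Finset.range (n - 2),
          |f ((i : ℝ) / ((n : ℝ) - 1)) - 2 * f (((i : ℝ) + 1) / ((n : ℝ) - 1))
            + f (((i : ℝ) + 2) / ((n : ℝ) - 1))|
      = ∑ i ∈ Finset.range (n - 2), |f' (u (i+1)) - f' (u i)| := by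
    rw [Finset.mul_sum]
    apply Finset.sum_congr rfl
    intro i hi
    have hi' : i < n - 2 := Finset.mem_range.1 hi
    have e1 : u i = η i := by simp only [hu]; rw [min_eq_left (by omega)]
    have e2 : u (i+1) = η (i+1) := by simp only [hu]; rw [min_eq_left (by omega)]
    have v1 : f' (η i) = d * (f (c (i+1)) - f (c i)) := hη2 i (by omega)
    have v2 : f' (η (i+1)) = d * (f (c (i+2)) - f (c (i+1))) := by
      have := hη2 (i+1) (by omega)
      simpa using this
    rw [e1, e2, v1, v2]
    have c0 : c i = (i : ℝ) / ((n:ℝ) - 1) := by simp [hc, hd]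
    have c1 : c (i+1) = ((i : ℝ) + 1) / ((n:ℝ) - 1) := by simp [hc, hd]
    have c2 : c (i+2) = ((i : ℝ) + 2) / ((n:ℝ) - 1) := by simp [hc, hd]
    rw [c0, c1, c2, ← abs_of_pos (show (0:ℝ) < (n:ℝ)-1 from hdpos), ← abs_mul]
    congr 1
    simp only [hd]
    ring
  rw [hmain]
  -- variation bound
  have hsum := eVariationOn.sum_le (f := f') (n := n-2) humono (fun i => humem i)
  have hofreal : ENNReal.ofReal (∑ i ∈ Finset.range (n - 2), |f' (u (i+1)) - f' (u i)|)
      ≤ eVariationOn f' (Icc 0 1) := by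
    rw [ENNReal.ofReal_sum_of_nonneg (fun _ _ => abs_nonneg _)]
    refine le_trans (le_of_eq (Finset.sum_congr rfl fun i _ => ?_)) hsum
    rw [edist_dist, Real.dist_eq, abs_sub_comm]
  exact (ENNReal.ofReal_le_iff_le_toReal hbv).1 hofreal
end

section
/- Let n ≥ 2 be an integer, let x_i = (i−1)/(n−1) for i = 1,…,n, and let f : [0,1] → ℝ be continuous and differentiable with derivative f′ of finite total variation on [0,1]. Let A_n(f)′ denote the piecewise constant function that equals (n−1)[f(x_{i+1}) − f(x_i)] on each interval (x_i, x_{i+1}). Then ∫₀¹ |f′(x) − A_n(f)′(x)| dx ≤ Var(f′)/(2(n−1)). -/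
open MeasureTheory Set

lemma key_interval (g : ℝ → ℝ) (a b c V : ℝ) (hab : a < b) (hV : 0 ≤ V)
    (hg : IntervalIntegrable g volume a b)
    (hbd : ∀ x ∈ Icc a b, ∀ y ∈ Icc a b, g x - g y ≤ V)
    (hc : (∫ x in a..b, g x) = (b - a) * c) :
    (∫ x in a..b, |g x - c|) ≤ (b - a) * V / 2 := by
  rcases eq_or_lt_of_le hV with hV0 | hVpos
  · -- V = 0 : g constant on Icc a b
    have hgeq : ∀ x ∈ Icc a b, g x = g a := by
      intro x hx
      have h1 := hbd x hx a (left_mem_Icc.2 hab.le)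
      have h2 := hbd a (left_mem_Icc.2 hab.le) x hx
      linarith [hV0 ▸ h1, hV0 ▸ h2]
    have hca : c = g a := by
      have : (∫ x in a..b, g x) = (∫ x in a..b, g a) := by
        apply intervalIntegral.integral_congr
        intro x hx
        exact hgeq x ((uIcc_of_le hab.le ▸ hx))
      rw [this, intervalIntegral.integral_const] at hc
      have hba : (0:ℝ) < b - a := by linarith
      simp only [smul_eq_mul] at hc
      exact (mul_left_cancel₀ hba.ne' hc).symm
    have : (∫ x in a..b, |g x - c|) = ∫ x in a..b, (0:ℝ) := by
      apply intervalIntegral.integral_congr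
      intro x hx
      simp [hgeq x (uIcc_of_le hab.le ▸ hx), hca]
    rw [this]
    simp
    have hba : (0:ℝ) < b - a := by linarith
    have := mul_nonneg hba.le hV
    linarith
  · -- V > 0
    obtain ⟨m, hm⟩ : ∃ m : ℝ, m = sInf (g '' Icc a b) := ⟨_, rfl⟩
    have hne : (g '' Icc a b).Nonempty := ⟨g a, mem_image_of_mem _ (left_mem_Icc.2 hab.le)⟩
    have hbdd : BddBelow (g '' Icc a b) := by
      refine ⟨g a - V, ?_⟩
      rintro z ⟨y, hy, rfl⟩
      have := hbd a (left_mem_Icc.2 hab.le) y hy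
      linarith
    have hmle : ∀ x ∈ Icc a b, m ≤ g x := fun x hx => hm ▸ csInf_le hbdd (mem_image_of_mem _ hx)
    obtain ⟨M, hM⟩ : ∃ M : ℝ, M = m + V := ⟨_, rfl⟩
    have hleM : ∀ x ∈ Icc a b, g x ≤ M := by
      intro x hx
      rw [hM]
      have : g x - V ≤ m := by
        rw [hm]
        apply le_csInf hne
        rintro z ⟨y, hy, rfl⟩
        have := hbd x hx y hy
        linarith
      linarith
    have hba : (0:ℝ) < b - a := by linarith
    -- integrability facts
    have hg1 : IntervalIntegrable (fun x => |g x - c|) volume a b :=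
      (hg.sub intervalIntegrable_const).abs
    -- mean bounds : m ≤ c ≤ M
    have hintlo : (b - a) * m ≤ ∫ x in a..b, g x := by
      have h := intervalIntegral.integral_mono_on hab.le intervalIntegrable_const hg hmle
      simp only [intervalIntegral.integral_const, smul_eq_mul] at h
      linarith
    have hinthi : (∫ x in a..b, g x) ≤ (b - a) * M := by
      have h := intervalIntegral.integral_mono_on hab.le hg intervalIntegrable_const hleM
      simp only [intervalIntegral.integral_const, smul_eq_mul] at h
      linarith
    have hmc : m ≤ c := by
      rw [hc] at hintlo
      nlinarith
    have hcM : c ≤ M := by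
      rw [hc] at hinthi
      nlinarith
    -- pointwise inequality
    have hpt : ∀ x ∈ Icc a b,
        |g x - c| * V ≤ (M - c) * (g x - m) + (c - m) * (M - g x) := by
      intro x hx
      have h1 := hmle x hx
      have h2 := hleM x hx
      have hVmm : V = M - m := by rw [hM]; ring
      rcases le_total c (g x) with h | h
      · rw [abs_of_nonneg (by linarith)]
        nlinarith
      · rw [abs_of_nonpos (by linarith)]
        nlinarith
    -- integrate
    have hint2 : IntervalIntegrable (fun x => (M - c) * (g x - m) + (c - m) * (M - g x))
        volume a b := by
      apply IntervalIntegrable.add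
      · exact (hg.sub intervalIntegrable_const).const_mul _
      · exact (intervalIntegrable_const.sub hg).const_mul _
    have hmono := intervalIntegral.integral_mono_on hab.le (hg1.mul_const V) hint2 hpt
    have hL : (∫ x in a..b, |g x - c| * V) = (∫ x in a..b, |g x - c|) * V :=
      intervalIntegral.integral_mul_const _ _
    have hR : (∫ x in a..b, ((M - c) * (g x - m) + (c - m) * (M - g x)))
        = 2 * (b - a) * (M - c) * (c - m) := by
      rw [intervalIntegral.integral_add ((hg.sub intervalIntegrable_const).const_mul _)
        ((intervalIntegrable_const.sub hg).const_mul _),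
        intervalIntegral.integral_const_mul, intervalIntegral.integral_const_mul,
        intervalIntegral.integral_sub hg intervalIntegrable_const,
        intervalIntegral.integral_sub intervalIntegrable_const hg,
        intervalIntegral.integral_const, intervalIntegral.integral_const, hc]
      simp only [smul_eq_mul]
      ring
    rw [hL, hR] at hmono
    have hVmm : V = M - m := by rw [hM]; ring
    have h2 : 2 * (b - a) * (M - c) * (c - m) ≤ (b - a) * V ^ 2 / 2 := by
      rw [hVmm]
      nlinarith [mul_nonneg hba.le (sq_nonneg (M + m - 2*c))]
    have h3 : (∫ x in a..b, |g x - c|) * V ≤ ((b - a) * V / 2) * V := by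
      have : ((b - a) * V / 2) * V = (b - a) * V ^ 2 / 2 := by ring
      rw [this]
      linarith
    exact le_of_mul_le_mul_right h3 hVpos

/-- `∫₀¹ |f′ − A_n(f)′| ≤ Var(f′) / (2(n−1))` where `A_n(f)′` is the piecewise constant
derivative of the linear spline interpolant, equal to `(n−1)[f(x_{i+1}) − f(x_i)]` on the
`i`-th subinterval; the `L¹` norm is written as the sum of the integrals over the
subintervals. -/
theorem spline_derivative_L1_error
    (n : ℕ) (hn : 2 ≤ n) (f f' : ℝ → ℝ)
    (hf : ContinuousOn f (Icc 0 1))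
    (hderiv : ∀ x ∈ Icc (0:ℝ) 1, HasDerivWithinAt f (f' x) (Icc 0 1) x)
    (hbv : BoundedVariationOn f' (Icc 0 1))
    (hint : IntervalIntegrable f' volume 0 1) :
    ∑ i ∈ Finset.range (n - 1),
        (∫ x in ((i : ℝ) / ((n : ℝ) - 1))..(((i : ℝ) + 1) / ((n : ℝ) - 1)),
          |f' x - ((n : ℝ) - 1) *
            (f (((i : ℝ) + 1) / ((n : ℝ) - 1)) - f ((i : ℝ) / ((n : ℝ) - 1)))|)
      ≤ (eVariationOn f' (Icc 0 1)).toReal / (2 * ((n : ℝ) - 1)) := by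
  have h2n : (2:ℝ) ≤ (n:ℝ) := by exact_mod_cast hn
  set N : ℝ := (n:ℝ) - 1 with hNdef
  have hNpos : (0:ℝ) < N := by simp only [hNdef]; linarith
  have hcast : ((n - 1 : ℕ) : ℝ) = N := by
    rw [hNdef, Nat.cast_sub (by omega)]; norm_num
  -- basic facts about nodes
  have hnode : ∀ i : ℕ, i ≤ n - 1 → (i:ℝ) / N ≤ 1 := by
    intro i hi
    rw [div_le_one hNpos, ← hcast]
    exact_mod_cast hi
  have hnode0 : ∀ i : ℕ, (0:ℝ) ≤ (i:ℝ) / N := fun i => by positivity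
  -- per-interval estimate
  have key : ∀ i ∈ Finset.range (n-1),
      (∫ x in ((i:ℝ)/N)..(((i:ℝ)+1)/N),
        |f' x - N * (f (((i:ℝ)+1)/N) - f ((i:ℝ)/N))|)
        ≤ (eVariationOn f' (Icc ((i:ℝ)/N) (((i:ℝ)+1)/N))).toReal / (2*N) := by
    intro i hi
    rw [Finset.mem_range] at hi
    have hi1 : i + 1 ≤ n - 1 := by omega
    have hb1 : ((i:ℝ)+1)/N ≤ 1 := by
      have := hnode (i+1) hi1; push_cast at this ⊢; linarith
    have ha0 : (0:ℝ) ≤ (i:ℝ)/N := hnode0 i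
    have hab : (i:ℝ)/N < ((i:ℝ)+1)/N := by
      rw [div_lt_div_iff_of_pos_right hNpos]; linarith
    have hsub : Icc ((i:ℝ)/N) (((i:ℝ)+1)/N) ⊆ Icc (0:ℝ) 1 := Icc_subset_Icc ha0 hb1
    have hgint : IntervalIntegrable f' volume ((i:ℝ)/N) (((i:ℝ)+1)/N) := by
      apply hint.mono_set
      rw [uIcc_of_le hab.le, uIcc_of_le zero_le_one]
      exact hsub
    have hbdV : BoundedVariationOn f' (Icc ((i:ℝ)/N) (((i:ℝ)+1)/N)) := hbv.mono hsub
    have hVar : ∀ x ∈ Icc ((i:ℝ)/N) (((i:ℝ)+1)/N), ∀ y ∈ Icc ((i:ℝ)/N) (((i:ℝ)+1)/N),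
        f' x - f' y ≤ (eVariationOn f' (Icc ((i:ℝ)/N) (((i:ℝ)+1)/N))).toReal := by
      intro x hx y hy
      have h1 := eVariationOn.edist_le f' hx hy
      calc f' x - f' y ≤ |f' x - f' y| := le_abs_self _
        _ = dist (f' x) (f' y) := (Real.dist_eq _ _).symm
        _ = (edist (f' x) (f' y)).toReal := dist_edist _ _
        _ ≤ _ := ENNReal.toReal_mono hbdV h1
    have hftc : (∫ x in ((i:ℝ)/N)..(((i:ℝ)+1)/N), f' x)
        = f (((i:ℝ)+1)/N) - f ((i:ℝ)/N) := by
      apply intervalIntegral.integral_eq_sub_of_hasDeriv_right_of_le hab.le (hf.mono hsub)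
        ?_ hgint
      intro x hx
      have hx01 : x ∈ Ioo (0:ℝ) 1 := ⟨lt_of_le_of_lt ha0 hx.1, lt_of_lt_of_le hx.2 hb1⟩
      exact ((hderiv x (Ioo_subset_Icc_self hx01)).hasDerivAt
        (Icc_mem_nhds hx01.1 hx01.2)).hasDerivWithinAt
    have hba : (((i:ℝ)+1)/N) - ((i:ℝ)/N) = 1/N := by field_simp; ring
    have hc : (∫ x in ((i:ℝ)/N)..(((i:ℝ)+1)/N), f' x)
        = ((((i:ℝ)+1)/N) - ((i:ℝ)/N)) * (N * (f (((i:ℝ)+1)/N) - f ((i:ℝ)/N))) := by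
      rw [hftc, hba, one_div]
      exact (inv_mul_cancel_left₀ hNpos.ne' _).symm
    have hk := key_interval f' ((i:ℝ)/N) (((i:ℝ)+1)/N)
      (N * (f (((i:ℝ)+1)/N) - f ((i:ℝ)/N)))
      ((eVariationOn f' (Icc ((i:ℝ)/N) (((i:ℝ)+1)/N))).toReal)
      hab ENNReal.toReal_nonneg hgint hVar hc
    calc _ ≤ _ := hk
      _ = (eVariationOn f' (Icc ((i:ℝ)/N) (((i:ℝ)+1)/N))).toReal / (2*N) := by
          rw [hba, one_div, inv_mul_eq_div, div_div, mul_comm N 2]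
  -- sum of variations bounded by total variation
  have hsumVar : ∀ k : ℕ, k ≤ n - 1 →
      ∑ i ∈ Finset.range k, eVariationOn f' (Icc ((i:ℝ)/N) (((i:ℝ)+1)/N))
        ≤ eVariationOn f' (Icc 0 ((k:ℝ)/N)) := by
    intro k
    induction k with
    | zero => simp
    | succ k ih =>
      intro hk
      have hk' : k ≤ n - 1 := by omega
      rw [Finset.sum_range_succ]
      have hkk1 : (k:ℝ)/N ≤ ((k:ℝ)+1)/N := by
        rw [div_le_div_iff_of_pos_right hNpos]; linarith
      have h0k : (0:ℝ) ≤ (k:ℝ)/N := hnode0 k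
      have hmem : (k:ℝ)/N ∈ Icc (0:ℝ) (((k:ℝ)+1)/N) := ⟨h0k, hkk1⟩
      have hIcc := eVariationOn.Icc_add_Icc f' (s := Icc (0:ℝ) (((k:ℝ)+1)/N))
        h0k hkk1 hmem
      rw [Icc_inter_Icc, Icc_inter_Icc, Icc_inter_Icc] at hIcc
      simp only [max_self, min_self, le_refl, max_eq_right h0k, min_eq_right hkk1,
        max_eq_left h0k] at hIcc
      have hcast1 : ((k+1 : ℕ):ℝ) = (k:ℝ) + 1 := by push_cast; ring
      rw [hcast1, ← hIcc]
      exact add_le_add (ih hk') le_rfl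
  have htotal : ∑ i ∈ Finset.range (n-1), eVariationOn f' (Icc ((i:ℝ)/N) (((i:ℝ)+1)/N))
      ≤ eVariationOn f' (Icc 0 1) := by
    have h := hsumVar (n-1) le_rfl
    rwa [hcast, div_self hNpos.ne'] at h
  have hfin : ∀ i ∈ Finset.range (n-1),
      eVariationOn f' (Icc ((i:ℝ)/N) (((i:ℝ)+1)/N)) ≠ ⊤ := by
    intro i hi
    rw [Finset.mem_range] at hi
    have hi1 : i + 1 ≤ n - 1 := by omega
    have hb1 : ((i:ℝ)+1)/N ≤ 1 := by
      have := hnode (i+1) hi1; push_cast at this ⊢; linarith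
    exact hbv.mono (Icc_subset_Icc (hnode0 i) hb1)
  have hsumto : ∑ i ∈ Finset.range (n-1),
      (eVariationOn f' (Icc ((i:ℝ)/N) (((i:ℝ)+1)/N))).toReal
      ≤ (eVariationOn f' (Icc 0 1)).toReal := by
    rw [← ENNReal.toReal_sum hfin]
    exact ENNReal.toReal_mono hbv htotal
  calc ∑ i ∈ Finset.range (n - 1),
        (∫ x in ((i:ℝ)/N)..(((i:ℝ)+1)/N), |f' x - N * (f (((i:ℝ)+1)/N) - f ((i:ℝ)/N))|)
      ≤ ∑ i ∈ Finset.range (n-1),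
          (eVariationOn f' (Icc ((i:ℝ)/N) (((i:ℝ)+1)/N))).toReal / (2*N) :=
        Finset.sum_le_sum key
    _ = (∑ i ∈ Finset.range (n-1),
          (eVariationOn f' (Icc ((i:ℝ)/N) (((i:ℝ)+1)/N))).toReal) / (2*N) := by
        rw [Finset.sum_div]
    _ ≤ (eVariationOn f' (Icc 0 1)).toReal / (2*N) := by
        gcongr
end

section
/- Let f : [0,1] → ℝ be continuous and differentiable with derivative f′ of finite total variation on [0,1]. Then 2·∫₀¹ |f′(x) − (f(1) − f(0))| dx ≤ Var(f′); that is, for the integration problem the minimal cone constant is τ_min = 2: the weak semi-norm ‖f′ − f(1) + f(0)‖₁ is at most half of the strong semi-norm Var(f′). -/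
open MeasureTheory Set

/-- For the integration problem the minimal cone constant is `τ_min = 2`:
`2 ‖f′ − f(1) + f(0)‖₁ ≤ Var(f′)`. -/
theorem taumin_integration
    (f f' : ℝ → ℝ)
    (hf : ContinuousOn f (Icc 0 1))
    (hderiv : ∀ x ∈ Icc (0:ℝ) 1, HasDerivWithinAt f (f' x) (Icc 0 1) x)
    (hbv : BoundedVariationOn f' (Icc 0 1))
    (hint : IntervalIntegrable f' volume 0 1) :
    2 * ∫ x in (0:ℝ)..1, |f' x - (f 1 - f 0)|
      ≤ (eVariationOn f' (Icc 0 1)).toReal := by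
  set c : ℝ := f 1 - f 0 with hc
  set V : ℝ := (eVariationOn f' (Icc 0 1)).toReal with hV
  have hV0 : 0 ≤ V := ENNReal.toReal_nonneg
  have h0mem : (0:ℝ) ∈ Icc (0:ℝ) 1 := ⟨le_refl 0, zero_le_one⟩
  -- difference bound
  have hdiff : ∀ x ∈ Icc (0:ℝ) 1, ∀ y ∈ Icc (0:ℝ) 1, f' x - f' y ≤ V := by
    intro x hx y hy
    have h := eVariationOn.edist_le f' hx hy
    have h2 := ENNReal.toReal_mono hbv h
    rw [edist_dist, ENNReal.toReal_ofReal dist_nonneg, Real.dist_eq] at h2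
    exact le_trans (le_trans (le_abs_self _) h2) le_rfl
  have hne : (f' '' Icc 0 1).Nonempty := ⟨f' 0, 0, h0mem, rfl⟩
  have hbddA : BddAbove (f' '' Icc 0 1) := by
    refine ⟨f' 0 + V, ?_⟩
    rintro _ ⟨x, hx, rfl⟩
    have := hdiff x hx 0 h0mem
    linarith
  have hbddB : BddBelow (f' '' Icc 0 1) := by
    refine ⟨f' 0 - V, ?_⟩
    rintro _ ⟨x, hx, rfl⟩
    have := hdiff 0 h0mem x hx
    linarith
  set M : ℝ := sSup (f' '' Icc 0 1) with hM
  set m : ℝ := sInf (f' '' Icc 0 1) with hm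
  have hle_M : ∀ x ∈ Icc (0:ℝ) 1, f' x ≤ M := fun x hx => le_csSup hbddA ⟨x, hx, rfl⟩
  have hm_le : ∀ x ∈ Icc (0:ℝ) 1, m ≤ f' x := fun x hx => csInf_le hbddB ⟨x, hx, rfl⟩
  have hMmV : M - m ≤ V := by
    have hMle : M ≤ m + V := by
      apply csSup_le hne
      rintro _ ⟨x, hx, rfl⟩
      have hxm : f' x - V ≤ m := by
        apply le_csInf hne
        rintro _ ⟨y, hy, rfl⟩
        have := hdiff x hx y hy
        linarith
      linarith
    linarith
  -- FTC
  have hc_int : ∫ x in (0:ℝ)..1, f' x = c := by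
    apply intervalIntegral.integral_eq_sub_of_hasDeriv_right_of_le zero_le_one hf
      (fun x hx => ?_) hint
    exact (hderiv x (Ioo_subset_Icc_self hx)).mono_of_mem_nhdsWithin
      (mem_nhdsWithin_of_mem_nhds (Icc_mem_nhds hx.1 hx.2))
  -- integrability
  have hg_int : IntervalIntegrable (fun x => f' x - c) volume 0 1 :=
    hint.sub intervalIntegrable_const
  have habs_int : IntervalIntegrable (fun x => |f' x - c|) volume 0 1 := hg_int.abs
  have hmax : ∀ a : ℝ, max a 0 = (a + |a|) / 2 := by
    intro a
    rcases le_total a 0 with h | h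
    · rw [max_eq_right h, abs_of_nonpos h]; ring
    · rw [max_eq_left h, abs_of_nonneg h]; ring
  have hP_int : IntervalIntegrable (fun x => max (f' x - c) 0) volume 0 1 := by
    have : (fun x => max (f' x - c) 0) = fun x => ((f' x - c) + |f' x - c|) / 2 :=
      funext fun x => hmax _
    rw [this]
    exact (hg_int.add habs_int).div_const 2
  have hN_int : IntervalIntegrable (fun x => max (c - f' x) 0) volume 0 1 := by
    have : (fun x => max (c - f' x) 0) = fun x => ((c - f' x) + |c - f' x|) / 2 := by
      funext x; exact hmax _
    rw [this]
    exact ((intervalIntegrable_const.sub hint).add (intervalIntegrable_const.sub hint).abs).div_const 2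
  set P : ℝ := ∫ x in (0:ℝ)..1, max (f' x - c) 0 with hPdef
  set N : ℝ := ∫ x in (0:ℝ)..1, max (c - f' x) 0 with hNdef
  have hP0 : 0 ≤ P := intervalIntegral.integral_nonneg zero_le_one fun x _ => le_max_right _ _
  -- ∫ g = 0
  have hgzero : ∫ x in (0:ℝ)..1, (f' x - c) = 0 := by
    rw [intervalIntegral.integral_sub hint intervalIntegrable_const]
    simp [hc_int]
  have hPN : P = N := by
    have hsub : (fun x => max (f' x - c) 0 - max (c - f' x) 0) = fun x => f' x - c := by
      funext x
      rcases le_total (f' x) c with h | h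
      · rw [max_eq_right (by linarith), max_eq_left (by linarith)]; ring
      · rw [max_eq_left (by linarith), max_eq_right (by linarith)]; ring
    have := intervalIntegral.integral_sub hP_int hN_int
    rw [hsub, hgzero] at this
    rw [hPdef, hNdef]
    linarith [this]
  have habs_eq : ∫ x in (0:ℝ)..1, |f' x - c| = P + N := by
    have hsum : (fun x => |f' x - c|) = fun x => max (f' x - c) 0 + max (c - f' x) 0 := by
      funext x
      rcases le_total (f' x) c with h | h
      · rw [max_eq_right (by linarith), max_eq_left (by linarith), abs_of_nonpos (by linarith)]
        ring
      · rw [max_eq_left (by linarith), max_eq_right (by linarith), abs_of_nonneg (by linarith)]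
        ring
    rw [hsum, intervalIntegral.integral_add hP_int hN_int]
  rw [habs_eq, ← hPN]
  -- now goal : 2 * (P + P) ≤ V
  by_cases hMc : M ≤ c
  · have hPzero : P = 0 := by
      rw [hPdef]
      have : EqOn (fun x => max (f' x - c) 0) (fun _ => (0:ℝ)) (uIcc 0 1) := by
        intro x hx
        rw [uIcc_of_le zero_le_one] at hx
        simp only
        rw [max_eq_right (by linarith [hle_M x hx])]
      rw [intervalIntegral.integral_congr this]
      simp
    rw [hPzero]; linarith
  by_cases hcm : c ≤ m
  · have hNzero : N = 0 := by
      rw [hNdef]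
      have : EqOn (fun x => max (c - f' x) 0) (fun _ => (0:ℝ)) (uIcc 0 1) := by
        intro x hx
        rw [uIcc_of_le zero_le_one] at hx
        simp only
        rw [max_eq_right (by linarith [hm_le x hx])]
      rw [intervalIntegral.integral_congr this]
      simp
    rw [hPN, hNzero]; linarith
  push_neg at hMc hcm
  -- main case : m < c < M
  have hMc' : 0 < M - c := by linarith
  have hcm' : 0 < c - m := by linarith
  have hkey : P / (M - c) + N / (c - m) ≤ 1 := by
    have hint1 : IntervalIntegrable
        (fun x => max (f' x - c) 0 / (M - c) + max (c - f' x) 0 / (c - m)) volume 0 1 :=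
      (hP_int.div_const _).add (hN_int.div_const _)
    have hmono := intervalIntegral.integral_mono_on (μ := volume) zero_le_one hint1
      intervalIntegrable_const (g := fun _ => (1:ℝ)) ?_
    · rw [intervalIntegral.integral_add (hP_int.div_const _) (hN_int.div_const _),
        intervalIntegral.integral_div, intervalIntegral.integral_div] at hmono
      simpa using hmono
    · intro x hx
      rcases le_total (f' x) c with h | h
      · rw [max_eq_right (by linarith), max_eq_left (by linarith)]
        have h1 : (c - f' x) / (c - m) ≤ 1 := by
          rw [div_le_one hcm']
          linarith [hm_le x hx]
        simpa using h1
      · rw [max_eq_left (by linarith), max_eq_right (by linarith)]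
        have h1 : (f' x - c) / (M - c) ≤ 1 := by
          rw [div_le_one hMc']
          linarith [hle_M x hx]
        simpa using h1
  rw [← hPN] at hkey
  have hkey2 : P * (c - m) + P * (M - c) ≤ (M - c) * (c - m) := by
    have := hkey
    rw [div_add_div _ _ (ne_of_gt hMc') (ne_of_gt hcm'), div_le_one (by positivity)] at this
    nlinarith
  nlinarith [sq_nonneg (M + m - 2 * c), sq_nonneg (M - m), mul_pos hMc' hcm']
end

section
/- Let τ ≥ 2 and let n be an integer with n > 1 + τ/2. Let f : [0,1] → ℝ be continuous and differentiable with derivative f′ of finite total variation, and suppose f lies in the cone C_τ, i.e., Var(f′) ≤ τ·∫₀¹ |f′(x) − (f(1) − f(0))| dx. With nodes x_i = (i−1)/(n−1), i = 1,…,n, T_n(f) the composite trapezoidal rule, and F̃_n(f) = Σ_{i=1}^{n−1} |f(x_{i+1}) − f(x_i) − (f(1)−f(0))/(n−1)|, one has the data-driven error bound |∫₀¹ f(x) dx − T_n(f)| ≤ τ·F̃_n(f) / (4(n−1)(2n−2−τ)). In particular, if τ·F̃_n(f)/(4(n−1)(2n−2−τ)) ≤ ε then the adaptive trapezoidal algorithm's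 stopping criterion guarantees |∫₀¹ f − T_n(f)| ≤ ε. -/
open MeasureTheory Set


private lemma ftc01 (f f' : ℝ → ℝ) {a b : ℝ} (hab : a ≤ b) (h0 : 0 ≤ a) (h1 : b ≤ 1)
    (hf : ContinuousOn f (Icc 0 1))
    (hderiv : ∀ x ∈ Icc (0:ℝ) 1, HasDerivWithinAt f (f' x) (Icc 0 1) x)
    (hint : IntervalIntegrable f' volume a b) :
    ∫ x in a..b, f' x = f b - f a := by
  apply intervalIntegral.integral_eq_sub_of_hasDeriv_right_of_le hab
    (hf.mono (Icc_subset_Icc h0 h1)) (fun x hx => ?_) hint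
  have hx01 : x ∈ Ioo (0:ℝ) 1 := ⟨lt_of_le_of_lt h0 hx.1, lt_of_lt_of_le hx.2 h1⟩
  exact ((hderiv x (Ioo_subset_Icc_self hx01)).hasDerivAt
    (Icc_mem_nhds hx01.1 hx01.2)).hasDerivWithinAt

private lemma trap_id (f f' : ℝ → ℝ) {a b : ℝ} (hab : a ≤ b) (h0 : 0 ≤ a) (h1 : b ≤ 1)
    (hf : ContinuousOn f (Icc 0 1))
    (hderiv : ∀ x ∈ Icc (0:ℝ) 1, HasDerivWithinAt f (f' x) (Icc 0 1) x)
    (hint : IntervalIntegrable f' volume a b) :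
    (∫ x in a..b, f x) - (b - a) * (f a + f b) / 2
      = ∫ x in a..b, ((a + b) / 2 - x) * f' x := by
  set m := (a + b) / 2 with hm
  have hK : IntervalIntegrable (fun x => (m - x) * f' x) volume a b :=
    hint.continuousOn_mul (by fun_prop)
  have hfc : ContinuousOn f (Icc a b) := hf.mono (Icc_subset_Icc h0 h1)
  have hfi : IntervalIntegrable f volume a b :=
    (hfc.mono (by rw [uIcc_of_le hab])).intervalIntegrable
  have key : ∫ x in a..b, ((m - x) * f' x - f x)
      = (m - b) * f b - (m - a) * f a := by
    apply intervalIntegral.integral_eq_sub_of_hasDeriv_right_of_le hab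
      (ContinuousOn.mul (by fun_prop) hfc) (fun x hx => ?_) (hK.sub hfi)
    have hx01 : x ∈ Ioo (0:ℝ) 1 := ⟨lt_of_le_of_lt h0 hx.1, lt_of_lt_of_le hx.2 h1⟩
    have hfd : HasDerivAt f (f' x) x :=
      (hderiv x (Ioo_subset_Icc_self hx01)).hasDerivAt (Icc_mem_nhds hx01.1 hx01.2)
    have hd : HasDerivAt (fun x => (m - x) * f x) ((0 - 1) * f x + (m - id x) * f' x) x :=
      (((hasDerivAt_const x m).sub (hasDerivAt_id x)).mul hfd)
    have hd2 := hd.hasDerivWithinAt (s := Set.Ioi x)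
    convert hd2 using 1
    · funext y; simp only [Pi.mul_apply]
    · show _ = (0 - 1) * f x + (m - x) * f' x
      ring
  rw [intervalIntegral.integral_sub hK hfi] at key
  have : (m - b) * f b - (m - a) * f a = -((b - a) * (f a + f b) / 2) := by
    rw [hm]; ring
  rw [this] at key
  linarith [key]


private lemma kernel_bound (f' : ℝ → ℝ) {a b : ℝ} (hab : a ≤ b)
    (hbv : BoundedVariationOn f' (Icc a b))
    (hint : IntervalIntegrable f' volume a b) :
    |∫ x in a..b, ((a + b) / 2 - x) * f' x|
      ≤ (eVariationOn f' (Icc a b)).toReal * (b - a) ^ 2 / 8 := by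
  set m := (a + b) / 2 with hm
  set V := (eVariationOn f' (Icc a b)).toReal with hV
  have hV0 : 0 ≤ V := ENNReal.toReal_nonneg
  have ham : a ≤ m := by rw [hm]; linarith
  have hmb : m ≤ b := by rw [hm]; linarith
  have h2m : 2 * m - a = b := by rw [hm]; ring
  have hi1 : IntervalIntegrable f' volume a m :=
    hint.mono_set (by rw [uIcc_of_le hab, uIcc_of_le ham]; exact Icc_subset_Icc le_rfl hmb)
  have hi2 : IntervalIntegrable f' volume m b :=
    hint.mono_set (by rw [uIcc_of_le hab, uIcc_of_le hmb]; exact Icc_subset_Icc ham le_rfl)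
  have hK1 : IntervalIntegrable (fun x => (m - x) * f' x) volume a m :=
    hi1.continuousOn_mul (by fun_prop)
  have hK2 : IntervalIntegrable (fun x => (m - x) * f' x) volume m b :=
    hi2.continuousOn_mul (by fun_prop)
  have hcomp : IntervalIntegrable (fun x => f' (2 * m - x)) volume a m := by
    have h := (hi2.comp_sub_left (2 * m)).symm
    rw [show 2 * m - m = m by ring, show 2 * m - b = a by rw [hm]; ring] at h
    exact h
  have hKc : IntervalIntegrable (fun x => (m - x) * f' (2 * m - x)) volume a m :=
    hcomp.continuousOn_mul (by fun_prop)
  have refl1 : (∫ x in a..m, (m - x) * f' (2 * m - x)) = ∫ x in m..b, (x - m) * f' x := by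
    have h := intervalIntegral.integral_comp_sub_left (a := a) (b := m)
      (fun u => (u - m) * f' u) (2 * m)
    rw [show 2 * m - m = m by ring, h2m] at h
    rw [← h]
    apply intervalIntegral.integral_congr
    intro x _
    ring_nf
  have hsplit : (∫ x in a..b, (m - x) * f' x)
      = (∫ x in a..m, (m - x) * f' x) + ∫ x in m..b, (m - x) * f' x :=
    (intervalIntegral.integral_add_adjacent_intervals hK1 hK2).symm
  have hneg : (∫ x in m..b, (m - x) * f' x) = -∫ x in m..b, (x - m) * f' x := by
    rw [← intervalIntegral.integral_neg]
    apply intervalIntegral.integral_congr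
    intro x _
    ring
  have hmain : (∫ x in a..b, (m - x) * f' x)
      = ∫ x in a..m, (m - x) * (f' x - f' (2 * m - x)) := by
    rw [hsplit, hneg, ← refl1, ← sub_eq_add_neg, ← intervalIntegral.integral_sub hK1 hKc]
    apply intervalIntegral.integral_congr
    intro x _
    ring
  rw [hmain]
  have habs := intervalIntegral.abs_integral_le_integral_abs
    (f := fun x => (m - x) * (f' x - f' (2 * m - x))) (μ := volume) ham
  refine habs.trans ?_
  have hD : IntervalIntegrable (fun x => (m - x) * (f' x - f' (2 * m - x))) volume a m :=
    (hi1.sub hcomp).continuousOn_mul (by fun_prop)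
  have hmono : (∫ x in a..m, |(m - x) * (f' x - f' (2 * m - x))|)
      ≤ ∫ x in a..m, (m - x) * V := by
    apply intervalIntegral.integral_mono_on (g := fun x => (m - x) * V) ham hD.abs
      ((intervalIntegrable_const (c := V)).continuousOn_mul (by fun_prop))
    intro x hx
    rw [abs_mul, abs_of_nonneg (by linarith [hx.2] : (0:ℝ) ≤ m - x)]
    apply mul_le_mul_of_nonneg_left _ (by linarith [hx.2])
    have hx1 : x ∈ Icc a b := ⟨hx.1, hx.2.trans hmb⟩
    have hx2 : 2 * m - x ∈ Icc a b := ⟨by linarith [hx.2, ham], by linarith [hx.1]⟩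
    have := hbv.dist_le hx1 hx2
    rwa [Real.dist_eq] at this
  refine hmono.trans ?_
  have hend : (∫ x in a..m, (m - x) * V) = V * (m - a) ^ 2 / 2 := by
    rw [intervalIntegral.integral_mul_const]
    rw [intervalIntegral.integral_sub intervalIntegrable_const intervalIntegral.intervalIntegrable_id,
      integral_id, intervalIntegral.integral_const]
    simp [smul_eq_mul]
    ring
  rw [hend]
  have hq : (m - a) ^ 2 = (b - a) ^ 2 / 4 := by rw [hm]; ring
  rw [hq]
  ring_nf
  linarith [le_refl (V * (b - a) ^ 2)]


private lemma l1_bound (g : ℝ → ℝ) {a b V : ℝ} (hab : a ≤ b) (hV : 0 ≤ V)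
    (hbound : ∀ x ∈ Icc a b, ∀ y ∈ Icc a b, |g x - g y| ≤ V)
    (hint : IntervalIntegrable g volume a b) :
    (∫ x in a..b, |g x|) ≤ |∫ x in a..b, g x| + (b - a) * V / 2 := by
  have hba : (0:ℝ) ≤ b - a := sub_nonneg.2 hab
  have hu_int : IntervalIntegrable (fun x => max (g x) 0) volume a b := by
    have h := (hint.add hint.abs).div_const 2
    have he : (fun x => (g x + |g x|) / 2) = fun x => max (g x) 0 := by
      funext x
      rcases le_total (g x) 0 with h0 | h0
      · rw [abs_of_nonpos h0, max_eq_right h0]; ring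
      · rw [abs_of_nonneg h0, max_eq_left h0]; ring
    rwa [he] at h
  have hv_int : IntervalIntegrable (fun x => max (-g x) 0) volume a b := by
    have h : IntervalIntegrable (fun x => (-g x + |g x|) / 2) volume a b := by
      simpa using (hint.neg.add hint.abs).div_const 2
    have he : (fun x => (-g x + |g x|) / 2) = fun x => max (-g x) 0 := by
      funext x
      rcases le_total (g x) 0 with h0 | h0
      · rw [abs_of_nonpos h0, max_eq_left (by linarith)]; ring
      · rw [abs_of_nonneg h0, max_eq_right (by linarith)]; ring
    rwa [he] at h
  set u := ∫ x in a..b, max (g x) 0 with hu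
  set v := ∫ x in a..b, max (-g x) 0 with hv
  have hu0 : 0 ≤ u := intervalIntegral.integral_nonneg hab (fun x _ => le_max_right _ _)
  have hv0 : 0 ≤ v := intervalIntegral.integral_nonneg hab (fun x _ => le_max_right _ _)
  have hsum : (∫ x in a..b, |g x|) = u + v := by
    rw [hu, hv, ← intervalIntegral.integral_add hu_int hv_int]
    apply intervalIntegral.integral_congr
    intro x _
    exact (max_zero_add_max_neg_zero_eq_abs_self (g x)).symm
  have hdiff : (∫ x in a..b, g x) = u - v := by
    rw [hu, hv, ← intervalIntegral.integral_sub hu_int hv_int]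
    apply intervalIntegral.integral_congr
    intro x _
    show g x = max (g x) 0 - max (-g x) 0
    rcases le_total (g x) 0 with h0 | h0
    · rw [max_eq_right h0, max_eq_left (by linarith)]; ring
    · rw [max_eq_left h0, max_eq_right (by linarith)]; ring
  rw [hsum, hdiff]
  -- sup and inf of g on [a,b]
  have hane : a ∈ Icc a b := left_mem_Icc.2 hab
  have hne : (g '' Icc a b).Nonempty := ⟨g a, mem_image_of_mem _ hane⟩
  have bddA : BddAbove (g '' Icc a b) := by
    refine ⟨g a + V, fun y hy => ?_⟩
    obtain ⟨x, hx, rfl⟩ := hy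
    have := hbound x hx a hane
    have := abs_le.1 this
    linarith [this.2]
  have bddB : BddBelow (g '' Icc a b) := by
    refine ⟨g a - V, fun y hy => ?_⟩
    obtain ⟨x, hx, rfl⟩ := hy
    have := abs_le.1 (hbound x hx a hane)
    linarith [this.1]
  set M := sSup (g '' Icc a b) with hM
  set mI := sInf (g '' Icc a b) with hmI
  have hMx : ∀ x ∈ Icc a b, g x ≤ M := fun x hx => le_csSup bddA (mem_image_of_mem _ hx)
  have hmx : ∀ x ∈ Icc a b, mI ≤ g x := fun x hx => csInf_le bddB (mem_image_of_mem _ hx)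
  have hMm : M - mI ≤ V := by
    have h1 : M ≤ mI + V := by
      apply csSup_le hne
      rintro y ⟨x, hx, rfl⟩
      have h2 : g x - V ≤ mI := by
        apply le_csInf hne
        rintro z ⟨y', hy', rfl⟩
        have := abs_le.1 (hbound x hx y' hy')
        linarith [this.2]
      linarith
    linarith
  by_cases hm0 : 0 ≤ mI
  · have hveq : v = 0 := by
      rw [hv]
      have : ∀ x ∈ uIcc a b, max (-g x) 0 = (0:ℝ) := by
        intro x hx
        rw [uIcc_of_le hab] at hx
        exact max_eq_right (by linarith [hmx x hx])
      rw [intervalIntegral.integral_congr this, intervalIntegral.integral_zero]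
    rw [hveq, abs_of_nonneg (by linarith)]
    nlinarith [mul_nonneg hba hV]
  by_cases hM0 : M ≤ 0
  · have hueq : u = 0 := by
      rw [hu]
      have : ∀ x ∈ uIcc a b, max (g x) 0 = (0:ℝ) := by
        intro x hx
        rw [uIcc_of_le hab] at hx
        exact max_eq_right (by linarith [hMx x hx])
      rw [intervalIntegral.integral_congr this, intervalIntegral.integral_zero]
    rw [hueq, abs_of_nonpos (by linarith)]
    nlinarith [mul_nonneg hba hV]
  push_neg at hm0 hM0
  set A := -mI with hA
  set B := M with hB
  have hApos : 0 < A := by rw [hA]; linarith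
  have hBpos : 0 < B := hM0
  have hAB : A + B ≤ V := by rw [hA, hB]; linarith
  have hpt : ∀ x ∈ Icc a b, A * max (g x) 0 + B * max (-g x) 0 ≤ A * B := by
    intro x hx
    rcases le_total 0 (g x) with h0 | h0
    · rw [max_eq_left h0, max_eq_right (by linarith)]
      have := hMx x hx
      nlinarith
    · rw [max_eq_right h0, max_eq_left (by linarith)]
      have := hmx x hx
      nlinarith
  have key : A * u + B * v ≤ A * B * (b - a) := by
    have h := intervalIntegral.integral_mono_on (g := fun _ => A * B) hab
      ((hu_int.const_mul A).add (hv_int.const_mul B)) intervalIntegrable_const hpt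
    rw [intervalIntegral.integral_add (hu_int.const_mul A) (hv_int.const_mul B),
      intervalIntegral.integral_const_mul, intervalIntegral.integral_const_mul,
      intervalIntegral.integral_const, smul_eq_mul] at h
    rw [← hu, ← hv] at h
    linarith [h]
  have hABpos : (0:ℝ) < A + B := by linarith
  rcases le_total u v with h | h
  · rw [abs_of_nonpos (by linarith)]
    nlinarith [mul_le_mul_of_nonneg_left h hBpos.le, mul_nonneg hba (sq_nonneg (A - B)),
      mul_nonneg (mul_nonneg hba hABpos.le) (by linarith : (0:ℝ) ≤ V - (A + B)), key]
  · rw [abs_of_nonneg (by linarith)]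
    nlinarith [mul_le_mul_of_nonneg_left h hApos.le, mul_nonneg hba (sq_nonneg (A - B)),
      mul_nonneg (mul_nonneg hba hABpos.le) (by linarith : (0:ℝ) ≤ V - (A + B)), key]


private lemma evar_partition (f' : ℝ → ℝ) (x : ℕ → ℝ) :
    ∀ k : ℕ, (∀ i, i < k → x i ≤ x (i + 1)) →
      ∑ i ∈ Finset.range k, eVariationOn f' (Icc (x i) (x (i + 1)))
        = eVariationOn f' (Icc (x 0) (x k)) := by
  intro k
  induction k with
  | zero =>
    intro _
    simp only [Finset.range_zero, Finset.sum_empty, Icc_self]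
    exact (eVariationOn.subsingleton f' subsingleton_singleton).symm
  | succ k ih =>
    intro hm
    have hmk : ∀ i, i < k → x i ≤ x (i + 1) := fun i hi => hm i (Nat.lt_succ_of_lt hi)
    have h0 : ∀ m, m ≤ k → x 0 ≤ x m := by
      intro m
      induction m with
      | zero => intro _; exact le_rfl
      | succ m ihm =>
        intro h
        exact (ihm (by omega)).trans (hm m (by omega))
    have h0k : x 0 ≤ x k := h0 k le_rfl
    have hkk : x k ≤ x (k + 1) := hm k (Nat.lt_succ_self k)
    rw [Finset.sum_range_succ, ih hmk]
    have h := eVariationOn.Icc_add_Icc f' (s := Icc (x 0) (x (k + 1))) h0k hkk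
      ⟨h0k, hkk⟩
    rw [inter_eq_self_of_subset_right (Icc_subset_Icc le_rfl hkk),
      inter_eq_self_of_subset_right (Icc_subset_Icc h0k le_rfl),
      inter_self] at h
    exact h

/-- Data-driven error bound for the adaptive trapezoidal rule on the cone
`C_τ = {f : Var(f′) ≤ τ ‖f′ − f(1) + f(0)‖₁}`:
`|∫₀¹ f − T_n(f)| ≤ τ F̃_n(f) / (4(n−1)(2n−2−τ))` for `n > 1 + τ/2`, and hence the
stopping criterion `τ F̃_n(f)/(4(n−1)(2n−2−τ)) ≤ ε` guarantees an `ε`-accurate answer. -/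
theorem adaptive_trapezoid_error_bound
    (τ : ℝ) (hτ : 2 ≤ τ)
    (n : ℕ) (hn : 1 + τ / 2 < (n : ℝ))
    (f f' : ℝ → ℝ)
    (hf : ContinuousOn f (Icc 0 1))
    (hderiv : ∀ x ∈ Icc (0:ℝ) 1, HasDerivWithinAt f (f' x) (Icc 0 1) x)
    (hbv : BoundedVariationOn f' (Icc 0 1))
    (hint : IntervalIntegrable f' volume 0 1)
    (hcone : (eVariationOn f' (Icc 0 1)).toReal
      ≤ τ * ∫ x in (0:ℝ)..1, |f' x - (f 1 - f 0)|) :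
    |(∫ x in (0:ℝ)..1, f x) -
        (∑ i ∈ Finset.range (n - 1),
          (f ((i : ℝ) / ((n : ℝ) - 1)) + f (((i : ℝ) + 1) / ((n : ℝ) - 1))))
          / (2 * ((n : ℝ) - 1))|
      ≤ τ * (∑ i ∈ Finset.range (n - 1),
          |f (((i : ℝ) + 1) / ((n : ℝ) - 1)) - f ((i : ℝ) / ((n : ℝ) - 1))
            - (f 1 - f 0) / ((n : ℝ) - 1)|)
        / (4 * ((n : ℝ) - 1) * (2 * (n : ℝ) - 2 - τ)) ∧
    ∀ ε : ℝ,
      τ * (∑ i ∈ Finset.range (n - 1),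
          |f (((i : ℝ) + 1) / ((n : ℝ) - 1)) - f ((i : ℝ) / ((n : ℝ) - 1))
            - (f 1 - f 0) / ((n : ℝ) - 1)|)
        / (4 * ((n : ℝ) - 1) * (2 * (n : ℝ) - 2 - τ)) ≤ ε →
      |(∫ x in (0:ℝ)..1, f x) -
          (∑ i ∈ Finset.range (n - 1),
            (f ((i : ℝ) / ((n : ℝ) - 1)) + f (((i : ℝ) + 1) / ((n : ℝ) - 1))))
            / (2 * ((n : ℝ) - 1))|
        ≤ ε := by
  have hτ0 : (0:ℝ) < τ := by linarith
  have hn2 : (2:ℝ) < (n : ℝ) := by linarith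
  have hn2' : 2 < n := by exact_mod_cast hn2
  set N := n - 1 with hN
  have hNpos : 0 < N := by omega
  set r : ℝ := (n : ℝ) - 1 with hr
  have hrpos : (0:ℝ) < r := by rw [hr]; linarith
  have hrN : ((N : ℕ) : ℝ) = r := by
    rw [hN, hr]; push_cast [Nat.cast_sub (by omega : 1 ≤ n)]; ring
  have h2rτ : 0 < 2 * r - τ := by rw [hr]; linarith
  have h2r : 2 * (n : ℝ) - 2 - τ = 2 * r - τ := by rw [hr]; ring
  clear_value r
  set c0 : ℝ := f 1 - f 0 with hc0
  -- the nodes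
  set a : ℕ → ℝ := fun i => (i : ℝ) / r with ha
  have ha0 : a 0 = 0 := by simp [ha]
  have haN : a N = 1 := by rw [ha]; simp only [hrN]; exact div_self hrpos.ne'
  have hstep : ∀ i : ℕ, a (i + 1) - a i = 1 / r := by
    intro i; rw [ha]; push_cast; ring
  have hsucc : ∀ i : ℕ, a (i + 1) = ((i : ℝ) + 1) / r := by
    intro i; rw [ha]; push_cast; ring
  have hmono : ∀ i : ℕ, a i ≤ a (i + 1) := by
    intro i
    have := hstep i
    have : (0:ℝ) < 1 / r := by positivity
    linarith [hstep i]
  have hmono' : ∀ i j : ℕ, i ≤ j → a i ≤ a j := by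
    intro i j hij
    have hc : (i : ℝ) ≤ (j : ℝ) := by exact_mod_cast hij
    show (i : ℝ) / r ≤ (j : ℝ) / r
    rw [div_eq_mul_inv, div_eq_mul_inv]
    exact mul_le_mul_of_nonneg_right hc (by positivity)
  have hlow : ∀ i : ℕ, 0 ≤ a i := by
    intro i; rw [ha]; positivity
  have hhigh : ∀ i : ℕ, i ≤ N → a i ≤ 1 := by
    intro i hi
    rw [← haN]
    exact hmono' i N hi
  -- integrability on subintervals
  have hsub : ∀ i : ℕ, i + 1 ≤ N → uIcc (a i) (a (i + 1)) ⊆ uIcc (0:ℝ) 1 := by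
    intro i hi
    rw [uIcc_of_le (hmono i), uIcc_of_le (by norm_num : (0:ℝ) ≤ 1)]
    exact Icc_subset_Icc (hlow i) (hhigh (i + 1) hi)
  have hii : ∀ i : ℕ, i + 1 ≤ N → IntervalIntegrable f' volume (a i) (a (i + 1)) :=
    fun i hi => hint.mono_set (hsub i hi)
  have hfc : ∀ i : ℕ, i + 1 ≤ N → IntervalIntegrable f volume (a i) (a (i + 1)) := by
    intro i hi
    exact ((hf.mono (Icc_subset_Icc (hlow i) (hhigh _ hi))).mono
      (by rw [uIcc_of_le (hmono i)])).intervalIntegrable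
  have hgi : ∀ i : ℕ, i + 1 ≤ N →
      IntervalIntegrable (fun x => f' x - c0) volume (a i) (a (i + 1)) :=
    fun i hi => (hii i hi).sub intervalIntegrable_const
  -- local variations
  have hbvi : ∀ i : ℕ, i + 1 ≤ N → BoundedVariationOn f' (Icc (a i) (a (i + 1))) :=
    fun i hi => hbv.mono (Icc_subset_Icc (hlow i) (hhigh _ hi))
  set Vi : ℕ → ℝ := fun i => (eVariationOn f' (Icc (a i) (a (i + 1)))).toReal with hVi
  set Vtot : ℝ := (eVariationOn f' (Icc 0 1)).toReal with hVtot
  have hVi0 : ∀ i, 0 ≤ Vi i := fun i => ENNReal.toReal_nonneg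
  have hVsum : ∑ i ∈ Finset.range N, Vi i = Vtot := by
    have hpart := evar_partition f' a N (fun i _ => hmono i)
    rw [ha0, haN] at hpart
    rw [hVtot, ← hpart, ENNReal.toReal_sum]
    intro i hi
    exact hbvi i (Finset.mem_range.1 hi)
  -- splitting the integrals
  have hsplitf : (∫ x in (0:ℝ)..1, f x)
      = ∑ i ∈ Finset.range N, ∫ x in (a i)..(a (i + 1)), f x := by
    rw [← ha0, ← haN]
    exact (intervalIntegral.sum_integral_adjacent_intervals
      (fun i hi => hfc i hi)).symm
  have hsplitg : (∫ x in (0:ℝ)..1, |f' x - c0|)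
      = ∑ i ∈ Finset.range N, ∫ x in (a i)..(a (i + 1)), |f' x - c0| := by
    rw [← ha0, ← haN]
    exact (intervalIntegral.sum_integral_adjacent_intervals
      (fun i hi => (hgi i hi).abs)).symm
  -- per-interval trapezoid error
  have hEi : ∀ i : ℕ, i + 1 ≤ N →
      |(∫ x in (a i)..(a (i + 1)), f x) - (f (a i) + f (a (i + 1))) / (2 * r)|
        ≤ Vi i * (1 / r) ^ 2 / 8 := by
    intro i hi
    have hti := trap_id f f' (hmono i) (hlow i) (hhigh _ hi) hf hderiv (hii i hi)
    have hkb := kernel_bound f' (hmono i) (hbvi i hi) (hii i hi)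
    rw [hstep i] at hkb hti
    have he : (f (a i) + f (a (i + 1))) / (2 * r) = 1 / r * (f (a i) + f (a (i + 1))) / 2 := by
      ring
    rw [he, hti]
    exact hkb
  -- per-interval L1 bound
  have hFi : ∀ i : ℕ, i + 1 ≤ N →
      (∫ x in (a i)..(a (i + 1)), |f' x - c0|)
        ≤ |f (a (i + 1)) - f (a i) - c0 / r| + 1 / r * Vi i / 2 := by
    intro i hi
    have hb : ∀ x ∈ Icc (a i) (a (i + 1)), ∀ y ∈ Icc (a i) (a (i + 1)),
        |(f' x - c0) - (f' y - c0)| ≤ Vi i := by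
      intro x hx y hy
      have := (hbvi i hi).dist_le hx hy
      rw [Real.dist_eq] at this
      simpa using this
    have h1 := l1_bound (fun x => f' x - c0) (hmono i) (hVi0 i) hb (hgi i hi)
    rw [hstep i] at h1
    have h2 : (∫ x in (a i)..(a (i + 1)), (f' x - c0))
        = f (a (i + 1)) - f (a i) - c0 / r := by
      rw [intervalIntegral.integral_sub (hii i hi) intervalIntegrable_const,
        ftc01 f f' (hmono i) (hlow i) (hhigh _ hi) hf hderiv (hii i hi),
        intervalIntegral.integral_const, smul_eq_mul, hstep i]
      ring
    rw [h2] at h1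
    exact h1
  -- assemble: total trapezoid error
  set Ft : ℝ := ∑ i ∈ Finset.range N,
    |f (a (i + 1)) - f (a i) - c0 / r| with hFt
  have hFt0 : 0 ≤ Ft := Finset.sum_nonneg fun i _ => abs_nonneg _
  have hEtot : |(∫ x in (0:ℝ)..1, f x) -
      (∑ i ∈ Finset.range N, (f (a i) + f (a (i + 1)))) / (2 * r)|
      ≤ Vtot * (1 / r) ^ 2 / 8 := by
    rw [hsplitf, Finset.sum_div, ← Finset.sum_sub_distrib]
    refine (Finset.abs_sum_le_sum_abs _ _).trans ?_
    rw [← hVsum, Finset.sum_mul, Finset.sum_div]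
    apply Finset.sum_le_sum
    intro i hi
    exact hEi i (Finset.mem_range.1 hi)
  have hF1 : (∫ x in (0:ℝ)..1, |f' x - c0|) ≤ Ft + Vtot / (2 * r) := by
    rw [hsplitg, hFt]
    have : Vtot / (2 * r) = ∑ i ∈ Finset.range N, 1 / r * Vi i / 2 := by
      rw [← hVsum, Finset.sum_div]
      apply Finset.sum_congr rfl
      intro i _
      ring
    rw [this, ← Finset.sum_add_distrib]
    apply Finset.sum_le_sum
    intro i hi
    exact hFi i (Finset.mem_range.1 hi)
  -- the cone inequality
  have hVtot0 : 0 ≤ Vtot := ENNReal.toReal_nonneg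
  have hVle : Vtot ≤ τ * (Ft + Vtot / (2 * r)) := by
    refine hcone.trans ?_
    exact mul_le_mul_of_nonneg_left hF1 hτ0.le
  have hkey : Vtot * (2 * r - τ) ≤ 2 * r * τ * Ft := by
    have hrr : Vtot / (2 * r) * (2 * r) = Vtot := div_mul_cancel₀ _ (by positivity)
    have hexp : τ * (Ft + Vtot / (2 * r)) = τ * Ft + τ * (Vtot / (2 * r)) := by ring
    have h1 : Vtot - τ * (Vtot / (2 * r)) ≤ τ * Ft := by rw [hexp] at hVle; linarith
    have h2 := mul_le_mul_of_nonneg_right h1 (by positivity : (0:ℝ) ≤ 2 * r)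
    have h3 : τ * (Vtot / (2 * r) * (2 * r)) = τ * Vtot := by rw [hrr]
    nlinarith [h2, h3]
  -- final bound
  set E : ℝ := |(∫ x in (0:ℝ)..1, f x) -
      (∑ i ∈ Finset.range N, (f (a i) + f (a (i + 1)))) / (2 * r)| with hEdef
  have hE0 : 0 ≤ E := by rw [hEdef]; exact abs_nonneg _
  have main : E ≤ τ * Ft / (4 * r * (2 * r - τ)) := by
    rw [le_div_iff₀ (by positivity)]
    have hE8 : E * (8 * r ^ 2) ≤ Vtot := by
      have h8 : Vtot * (1 / r) ^ 2 / 8 * (8 * r ^ 2) = Vtot * ((r / r) ^ 2) := by ring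
      rw [div_self hrpos.ne', one_pow, mul_one] at h8
      have h1 := mul_le_mul_of_nonneg_right hEtot (by positivity : (0:ℝ) ≤ 8 * r ^ 2)
      rw [h8] at h1
      exact h1
    have hchain := (mul_le_mul_of_nonneg_right hE8 h2rτ.le).trans hkey
    have hid : E * (8 * r ^ 2) * (2 * r - τ) = E * (4 * r * (2 * r - τ)) * (2 * r) := by ring
    have hid2 : 2 * r * τ * Ft = τ * Ft * (2 * r) := by ring
    rw [hid, hid2] at hchain
    exact le_of_mul_le_mul_right hchain (by positivity)
  -- rewrite goal into node form
  have hgoal_eq1 : (∑ i ∈ Finset.range N,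
      (f ((i : ℝ) / r) + f (((i : ℝ) + 1) / r)))
      = ∑ i ∈ Finset.range N, (f (a i) + f (a (i + 1))) := by
    apply Finset.sum_congr rfl
    intro i _
    rw [hsucc i]
  have hgoal_eq2 : (∑ i ∈ Finset.range N,
      |f (((i : ℝ) + 1) / r) - f ((i : ℝ) / r) - c0 / r|) = Ft := by
    rw [hFt]
    apply Finset.sum_congr rfl
    intro i _
    rw [hsucc i]
  rw [hgoal_eq1, hgoal_eq2, h2r]
  exact ⟨main, fun ε hε => main.trans hε⟩
end

section
/- Let n be a nonnegative integer and let ξ_1, …, ξ_n be any points in [0,1]. Then there exists a function g : [0,1] → ℝ of total variation Var(g) ≤ 1 such that the function f(x) = ∫₀ˣ g(t) dt satisfies f(ξ_i) = 0 for all i = 1,…,n and ∫₀¹ f(x) dx ≥ 1/(16(n+1)²). (Fooling-function construction underlying the lower complexity bound for integration on balls: f is a triangle-shaped bump supported on the largest gap between consecutive sample points.) -/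
open MeasureTheory Set

private lemma evar_neg (f : ℝ → ℝ) (s : Set ℝ) :
    eVariationOn (fun x => -f x) s = eVariationOn f s := by
  unfold eVariationOn
  refine iSup_congr fun p => ?_
  exact Finset.sum_congr rfl fun i _ => edist_neg_neg _ _

private lemma antitone_evar {f : ℝ → ℝ} {s : Set ℝ} (hf : AntitoneOn f s) {a b : ℝ}
    (as : a ∈ s) (bs : b ∈ s) :
    eVariationOn f (s ∩ Icc a b) ≤ ENNReal.ofReal (f a - f b) := by
  rw [← evar_neg f]
  have hm : MonotoneOn (fun x => -f x) s := fun x hx y hy hxy => neg_le_neg (hf hx hy hxy)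
  have h2 := hm.eVariationOn_le as bs
  rwa [show -f b - -f a = f a - f b from by ring] at h2

private lemma poly_int (p q c : ℝ) :
    (∫ x in p..q, (x - c) * 4⁻¹) = ((q - c) ^ 2 - (p - c) ^ 2) * 8⁻¹ := by
  rw [intervalIntegral.integral_comp_sub_right (fun x => x * 4⁻¹) c,
    intervalIntegral.integral_mul_const, integral_id]
  ring

/-- Fooling-function construction for the lower complexity bound for integration on balls:
for any sample points `ξ_1,…,ξ_n` in `[0,1]` there is a `g` with `Var(g) ≤ 1` such that
`f(x) = ∫₀ˣ g` vanishes at every `ξ_i` while `∫₀¹ f ≥ 1/(16(n+1)²)`. -/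
theorem fooling_function_integration
    (n : ℕ) (ξ : Fin n → ℝ) (hξ : ∀ i, ξ i ∈ Icc (0:ℝ) 1) :
    ∃ g : ℝ → ℝ,
      eVariationOn g (Icc 0 1) ≤ 1 ∧
      (∀ i, (∫ t in (0:ℝ)..(ξ i), g t) = 0) ∧
      1 / (16 * ((n : ℝ) + 1) ^ 2) ≤ ∫ x in (0:ℝ)..1, ∫ t in (0:ℝ)..x, g t := by
  set L : ℝ := ((n : ℝ) + 1)⁻¹ with hLdef
  have hL : (0:ℝ) < L := by positivity
  -- pigeonhole: some interval of length L contains no sample point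
  obtain ⟨k, hk⟩ : ∃ k : Fin (n + 1),
      ∀ i, ξ i ∉ Ioo (((k : ℕ) : ℝ) * L) ((((k : ℕ) : ℝ) + 1) * L) := by
    by_contra hc
    push_neg at hc
    choose h hh using hc
    have hinj : Function.Injective h := by
      intro k₁ k₂ he
      have h1 := hh k₁
      have h2 := hh k₂
      rw [he] at h1
      have l1 : (((k₁ : ℕ) : ℝ)) * L < (((k₂ : ℕ) : ℝ) + 1) * L := h1.1.trans h2.2
      have l2 : (((k₂ : ℕ) : ℝ)) * L < (((k₁ : ℕ) : ℝ) + 1) * L := h2.1.trans h1.2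
      have n1 : (k₁ : ℕ) < (k₂ : ℕ) + 1 := by
        have := (mul_lt_mul_iff_left₀ hL).1 l1
        exact_mod_cast this
      have n2 : (k₂ : ℕ) < (k₁ : ℕ) + 1 := by
        have := (mul_lt_mul_iff_left₀ hL).1 l2
        exact_mod_cast this
      exact Fin.val_injective (by omega)
    have := Fintype.card_le_of_injective h hinj
    simp at this
  set a : ℝ := ((k : ℕ) : ℝ) * L with hadef
  set b : ℝ := (((k : ℕ) : ℝ) + 1) * L with hbdef
  set m : ℝ := (a + b) / 2 with hmdef
  have hba : b - a = L := by rw [hadef, hbdef]; ring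
  have ha0 : (0:ℝ) ≤ a := mul_nonneg (Nat.cast_nonneg _) hL.le
  have hb1 : b ≤ 1 := by
    have hkn : ((k : ℕ) : ℝ) + 1 ≤ (n : ℝ) + 1 := by
      have : (k : ℕ) ≤ n := by omega
      linarith [(show ((k:ℕ):ℝ) ≤ (n:ℝ) by exact_mod_cast this)]
    have : b ≤ ((n : ℝ) + 1) * L := mul_le_mul_of_nonneg_right hkn hL.le
    rwa [hLdef, mul_inv_cancel₀ (by positivity)] at this
  have hab : a < b := by linarith
  have ham : a < m := by rw [hmdef]; linarith
  have hmb : m < b := by rw [hmdef]; linarith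
  have ha1 : a ≤ 1 := le_trans hab.le hb1
  have hm1 : m ≤ 1 := le_trans hmb.le hb1
  set g : ℝ → ℝ := fun x =>
    (Ioc a m).indicator (fun _ => (4:ℝ)⁻¹) x + (Ioc m b).indicator (fun _ => -(4:ℝ)⁻¹) x
    with hgdef
  have hgval : ∀ x, g x = if a < x ∧ x ≤ m then (4:ℝ)⁻¹
      else if m < x ∧ x ≤ b then -(4:ℝ)⁻¹ else 0 := by
    intro x
    rw [hgdef]
    simp only [Set.indicator_apply, Set.mem_Ioc]
    by_cases h1 : a < x ∧ x ≤ m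
    · have h2 : ¬(m < x ∧ x ≤ b) := fun h => absurd h.1 (not_lt.2 h1.2)
      simp [h1, h2]
    · by_cases h2 : m < x ∧ x ≤ b <;> simp [h1, h2]
  have hg0 : ∀ x, x ≤ a → g x = 0 := by
    intro x hx
    rw [hgval, if_neg (by rintro ⟨h, -⟩; linarith), if_neg (by rintro ⟨h, -⟩; linarith)]
  have hgq : ∀ x, a < x → x ≤ m → g x = (4:ℝ)⁻¹ := by
    intro x h1 h2
    rw [hgval, if_pos ⟨h1, h2⟩]
  have hgmb : ∀ x, m < x → x ≤ b → g x = -(4:ℝ)⁻¹ := by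
    intro x h1 h2
    rw [hgval, if_neg (by rintro ⟨-, h⟩; linarith), if_pos ⟨h1, h2⟩]
  have hgb : ∀ x, b < x → g x = 0 := by
    intro x hx
    rw [hgval, if_neg (by rintro ⟨-, h⟩; linarith), if_neg (by rintro ⟨-, h⟩; linarith)]
  -- integrability
  have hint : Integrable g := by
    rw [hgdef]
    exact ((integrable_indicator_iff measurableSet_Ioc).2
        (integrableOn_const measure_Ioc_lt_top.ne)).add
      ((integrable_indicator_iff measurableSet_Ioc).2
        (integrableOn_const measure_Ioc_lt_top.ne))
  have hii : ∀ p q : ℝ, IntervalIntegrable g volume p q := fun p q => hint.intervalIntegrable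
  have key : ∀ p q c : ℝ, p ≤ q → (∀ t ∈ Ioc p q, g t = c) →
      (∫ t in p..q, g t) = (q - p) * c := by
    intro p q c hpq h
    rw [intervalIntegral.integral_congr_ae (g := fun _ => c)
        (MeasureTheory.ae_of_all _ (fun t ht => h t (by rwa [Set.uIoc_of_le hpq] at ht))),
      intervalIntegral.integral_const, smul_eq_mul]
  have hF0 : ∀ x, 0 ≤ x → x ≤ a → (∫ t in (0:ℝ)..x, g t) = 0 := by
    intro x hx0 hxa
    rw [key 0 x 0 hx0 (fun t ht => hg0 t (ht.2.trans hxa)), mul_zero]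
  have hFam : ∀ x, a ≤ x → x ≤ m → (∫ t in (0:ℝ)..x, g t) = (x - a) * 4⁻¹ := by
    intro x hax hxm
    rw [← intervalIntegral.integral_add_adjacent_intervals (hii 0 a) (hii a x),
      hF0 a ha0 le_rfl, key a x 4⁻¹ hax (fun t ht => hgq t ht.1 (ht.2.trans hxm)), zero_add]
  have hFmb : ∀ x, m ≤ x → x ≤ b → (∫ t in (0:ℝ)..x, g t) = (b - x) * 4⁻¹ := by
    intro x hmx hxb
    rw [← intervalIntegral.integral_add_adjacent_intervals (hii 0 m) (hii m x),
      hFam m ham.le le_rfl,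
      key m x (-(4:ℝ)⁻¹) hmx (fun t ht => hgmb t ht.1 (ht.2.trans hxb))]
    rw [hmdef]
    ring
  have hFr : ∀ x, b ≤ x → (∫ t in (0:ℝ)..x, g t) = 0 := by
    intro x hbx
    rw [← intervalIntegral.integral_add_adjacent_intervals (hii 0 b) (hii b x),
      hFmb b hmb.le le_rfl, key b x 0 hbx (fun t ht => hgb t ht.1)]
    ring
  refine ⟨g, ?_, ?_, ?_⟩
  · -- total variation bound
    have e1 : Icc (0:ℝ) 1 ∩ Icc 0 a = Icc 0 a :=
      inter_eq_self_of_subset_right (Icc_subset_Icc le_rfl ha1)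
    have e2 : Icc (0:ℝ) 1 ∩ Icc a m = Icc a m :=
      inter_eq_self_of_subset_right (Icc_subset_Icc ha0 hm1)
    have e3 : Icc (0:ℝ) 1 ∩ Icc m b = Icc m b :=
      inter_eq_self_of_subset_right (Icc_subset_Icc (ha0.trans ham.le) hb1)
    have e4 : Icc (0:ℝ) 1 ∩ Icc b 1 = Icc b 1 :=
      inter_eq_self_of_subset_right (Icc_subset_Icc (ha0.trans hab.le) le_rfl)
    have V1 : eVariationOn g (Icc 0 a) = 0 := by
      apply eVariationOn.constant_on
      rintro - ⟨x, hx, rfl⟩ - ⟨y, hy, rfl⟩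
      rw [hg0 x hx.2, hg0 y hy.2]
    have V2 : eVariationOn g (Icc a m) ≤ ENNReal.ofReal 4⁻¹ := by
      have hmono : MonotoneOn g (Icc a m) := by
        intro x hx y hy hxy
        rcases le_or_gt x a with h | h
        · rw [hg0 x h]
          rcases le_or_gt y a with h' | h'
          · rw [hg0 y h']
          · rw [hgq y h' hy.2]; norm_num
        · rw [hgq x h hx.2, hgq y (h.trans_le hxy) hy.2]
      have := hmono.eVariationOn_le (left_mem_Icc.2 ham.le) (right_mem_Icc.2 ham.le)
      rw [Set.inter_self, hgq m ham le_rfl, hg0 a le_rfl, sub_zero] at this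
      exact this
    have V3 : eVariationOn g (Icc m b) ≤ ENNReal.ofReal 2⁻¹ := by
      have hanti : AntitoneOn g (Icc m b) := by
        intro x hx y hy hxy
        rcases le_or_gt x m with h | h
        · have hxm : x = m := le_antisymm h hx.1
          rw [hxm, hgq m ham le_rfl]
          rcases le_or_gt y m with h' | h'
          · rw [le_antisymm h' hy.1, hgq m ham le_rfl]
          · rw [hgmb y h' hy.2]; norm_num
        · rw [hgmb x h hx.2, hgmb y (h.trans_le hxy) hy.2]
      have := antitone_evar hanti (left_mem_Icc.2 hmb.le) (right_mem_Icc.2 hmb.le)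
      rw [Set.inter_self, hgq m ham le_rfl, hgmb b hmb le_rfl] at this
      refine this.trans (ENNReal.ofReal_le_ofReal (by norm_num))
    have V4 : eVariationOn g (Icc b 1) ≤ ENNReal.ofReal 4⁻¹ := by
      have hmono : MonotoneOn g (Icc b 1) := by
        intro x hx y hy hxy
        rcases le_or_gt x b with h | h
        · rw [le_antisymm h hx.1, hgmb b hmb le_rfl]
          rcases le_or_gt y b with h' | h'
          · rw [le_antisymm h' hy.1, hgmb b hmb le_rfl]
          · rw [hgb y h']; norm_num
        · rw [hgb x h, hgb y (h.trans_le hxy)]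
      have := hmono.eVariationOn_le (left_mem_Icc.2 hb1) (right_mem_Icc.2 hb1)
      rw [Set.inter_self, hgmb b hmb le_rfl] at this
      refine this.trans (ENNReal.ofReal_le_ofReal ?_)
      have hg1 : g 1 ≤ 0 := by
        rcases lt_or_eq_of_le hb1 with h | h
        · rw [hgb 1 h]
        · rw [← h, hgmb b hmb le_rfl]; norm_num
      simp only [sub_neg_eq_add]
      exact add_le_of_nonpos_left hg1
    have split1 := eVariationOn.Icc_add_Icc g ha0 ha1 (Set.mem_Icc.mpr ⟨ha0, ha1⟩)
    have split2 := eVariationOn.Icc_add_Icc g ham.le hm1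
      (Set.mem_Icc.mpr ⟨ha0.trans ham.le, hm1⟩)
    have split3 := eVariationOn.Icc_add_Icc g hmb.le hb1
      (Set.mem_Icc.mpr ⟨ha0.trans hab.le, hb1⟩)
    calc eVariationOn g (Icc 0 1)
        = eVariationOn g (Icc (0:ℝ) 1 ∩ Icc 0 1) := by rw [Set.inter_self]
      _ = eVariationOn g (Icc (0:ℝ) 1 ∩ Icc 0 a) + eVariationOn g (Icc (0:ℝ) 1 ∩ Icc a 1) :=
          split1.symm
      _ = eVariationOn g (Icc (0:ℝ) 1 ∩ Icc 0 a) + (eVariationOn g (Icc (0:ℝ) 1 ∩ Icc a m)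
            + eVariationOn g (Icc (0:ℝ) 1 ∩ Icc m 1)) := by rw [split2]
      _ = eVariationOn g (Icc (0:ℝ) 1 ∩ Icc 0 a) + (eVariationOn g (Icc (0:ℝ) 1 ∩ Icc a m)
            + (eVariationOn g (Icc (0:ℝ) 1 ∩ Icc m b)
              + eVariationOn g (Icc (0:ℝ) 1 ∩ Icc b 1))) := by rw [split3]
      _ ≤ 0 + (ENNReal.ofReal 4⁻¹ + (ENNReal.ofReal 2⁻¹ + ENNReal.ofReal 4⁻¹)) := by
          rw [e1, e2, e3, e4, V1]
          exact add_le_add le_rfl (add_le_add V2 (add_le_add V3 V4))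
      _ = 1 := by
          rw [zero_add, ← ENNReal.ofReal_add (by norm_num) (by norm_num),
            ← ENNReal.ofReal_add (by norm_num) (by norm_num)]
          norm_num
  · -- vanishing at sample points
    intro i
    obtain ⟨hi0, hi1⟩ := hξ i
    rcases le_or_gt (ξ i) a with h | h
    · exact hF0 _ hi0 h
    · have hb : b ≤ ξ i := by
        by_contra hcon
        exact hk i ⟨h, lt_of_not_ge hcon⟩
      exact hFr _ hb
  · -- lower bound for the integral
    have hFc : Continuous (fun x => ∫ t in (0:ℝ)..x, g t) := hint.continuous_primitive 0
    have hFi : ∀ p q : ℝ, IntervalIntegrable (fun x => ∫ t in (0:ℝ)..x, g t) volume p q :=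
      fun p q => hFc.intervalIntegrable p q
    have hsplit : (∫ x in (0:ℝ)..1, ∫ t in (0:ℝ)..x, g t)
        = (∫ x in (0:ℝ)..a, ∫ t in (0:ℝ)..x, g t) + ((∫ x in a..m, ∫ t in (0:ℝ)..x, g t)
          + ((∫ x in m..b, ∫ t in (0:ℝ)..x, g t) + ∫ x in b..(1:ℝ), ∫ t in (0:ℝ)..x, g t)) := by
      rw [intervalIntegral.integral_add_adjacent_intervals (hFi m b) (hFi b 1),
        intervalIntegral.integral_add_adjacent_intervals (hFi a m) (hFi m 1),
        intervalIntegral.integral_add_adjacent_intervals (hFi 0 a) (hFi a 1)]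
    have P1 : (∫ x in (0:ℝ)..a, ∫ t in (0:ℝ)..x, g t) = 0 := by
      rw [intervalIntegral.integral_congr (g := fun _ => (0:ℝ)) ?_,
        intervalIntegral.integral_const, smul_zero]
      intro x hx
      rw [Set.uIcc_of_le ha0] at hx
      exact hF0 x hx.1 hx.2
    have P2 : (∫ x in a..m, ∫ t in (0:ℝ)..x, g t) = (m - a) ^ 2 * 8⁻¹ := by
      rw [intervalIntegral.integral_congr (g := fun x => (x - a) * 4⁻¹) ?_, poly_int]
      · ring
      · intro x hx
        rw [Set.uIcc_of_le ham.le] at hx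
        exact hFam x hx.1 hx.2
    have P3 : (∫ x in m..b, ∫ t in (0:ℝ)..x, g t) = (b - m) ^ 2 * 8⁻¹ := by
      rw [intervalIntegral.integral_congr (g := fun x => (b - x) * 4⁻¹) ?_]
      · have heq : ∀ x : ℝ, (b - x) * 4⁻¹ = -((x - b) * 4⁻¹) := fun x => by ring
        simp only [heq]
        rw [intervalIntegral.integral_neg, poly_int]
        ring
      · intro x hx
        rw [Set.uIcc_of_le hmb.le] at hx
        exact hFmb x hx.1 hx.2
    have P4 : (∫ x in b..(1:ℝ), ∫ t in (0:ℝ)..x, g t) = 0 := by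
      rw [intervalIntegral.integral_congr (g := fun _ => (0:ℝ)) ?_,
        intervalIntegral.integral_const, smul_zero]
      intro x hx
      rw [Set.uIcc_of_le hb1] at hx
      exact hFr x hx.1
    rw [hsplit, P1, P2, P3, P4]
    have hma : m - a = L / 2 := by rw [hmdef]; linarith
    have hbm : b - m = L / 2 := by rw [hmdef]; linarith
    rw [hma, hbm]
    have hne : (n : ℝ) + 1 ≠ 0 := by positivity
    rw [hLdef]
    rw [show (0:ℝ) + ((((n:ℝ)+1)⁻¹ / 2) ^ 2 * 8⁻¹ + ((((n:ℝ)+1)⁻¹ / 2) ^ 2 * 8⁻¹ + 0))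
        = 1 / (16 * ((n:ℝ)+1) ^ 2) by field_simp; ring]
end

section
/- Let f : [0,1] → ℝ be twice differentiable with |f″(x)| ≤ M for all x ∈ [0,1]. Then 2·sup_{0≤x≤1} |f′(x) − (f(1) − f(0))| ≤ M; that is, for the L∞ function-recovery problem the minimal cone constant is τ_min = 2: the weak semi-norm ‖f′ − f(1) + f(0)‖_∞ is at most half of the strong semi-norm ‖f″‖_∞. -/
open Set

private lemma mono_aux {a b : ℝ} {w w' : ℝ → ℝ} (hab : a ≤ b)
    (hc : ContinuousOn w (Icc a b))
    (hd : ∀ t ∈ Ioo a b, HasDerivAt w (w' t) t)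
    (hnp : ∀ t ∈ Ioo a b, w' t ≤ 0) : w b ≤ w a := by
  have h := antitoneOn_of_deriv_nonpos (convex_Icc a b) hc
    (fun t ht => by
      rw [interior_Icc] at ht
      exact (hd t ht).differentiableAt.differentiableWithinAt)
    (fun t ht => by
      rw [interior_Icc] at ht
      rw [(hd t ht).deriv]; exact hnp t ht)
  exact h (left_mem_Icc.2 hab) (right_mem_Icc.2 hab) hab

/-- For the `L∞` function-recovery problem the minimal cone constant is `τ_min = 2`:
`2 ‖f′ − f(1) + f(0)‖_∞ ≤ ‖f″‖_∞` (here `‖f″‖_∞ ≤ M` and the bound holds pointwise). -/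
theorem taumin_recovery
    (M : ℝ) (f f' f'' : ℝ → ℝ)
    (hd1 : ∀ x ∈ Icc (0:ℝ) 1, HasDerivWithinAt f (f' x) (Icc 0 1) x)
    (hd2 : ∀ x ∈ Icc (0:ℝ) 1, HasDerivWithinAt f' (f'' x) (Icc 0 1) x)
    (hM : ∀ x ∈ Icc (0:ℝ) 1, |f'' x| ≤ M) :
    ∀ x ∈ Icc (0:ℝ) 1, 2 * |f' x - (f 1 - f 0)| ≤ M := by
  intro x hx
  have hM0 : 0 ≤ M := le_trans (abs_nonneg _) (hM x hx)
  -- Lipschitz bound for f'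
  have lip : ∀ s ∈ Icc (0:ℝ) 1, ∀ t ∈ Icc (0:ℝ) 1, |f' t - f' s| ≤ M * |t - s| := by
    intro s hs t ht
    have := Convex.norm_image_sub_le_of_norm_hasDerivWithin_le hd2
      (fun y hy => by simpa [Real.norm_eq_abs] using hM y hy) (convex_Icc 0 1) hs ht
    simpa [Real.norm_eq_abs] using this
  have hcf : ContinuousOn f (Icc (0:ℝ) 1) := fun y hy => (hd1 y hy).continuousWithinAt
  set g : ℝ → ℝ := fun t => f t - f' x * t with hgdef
  have hgc : ContinuousOn g (Icc (0:ℝ) 1) :=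
    hcf.sub ((continuous_const.mul continuous_id).continuousOn)
  have hgd : ∀ t ∈ Ioo (0:ℝ) 1, HasDerivAt g (f' t - f' x) t := by
    intro t ht
    have h1 : HasDerivAt f (f' t) t :=
      (hd1 t (Ioo_subset_Icc_self ht)).hasDerivAt (Icc_mem_nhds ht.1 ht.2)
    have h2 : HasDerivAt (fun t : ℝ => f' x * t) (f' x) t := by
      simpa using (hasDerivAt_id t).const_mul (f' x)
    exact h1.sub h2
  have hqd : ∀ t : ℝ, HasDerivAt (fun t => M * (t - x) ^ 2 / 2) (M * (t - x)) t := by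
    intro t
    have := ((((hasDerivAt_id t).sub_const x).pow 2).const_mul M).div_const 2
    exact this.congr_deriv (by rw [show (2:ℕ) - 1 = 1 from rfl]; simp only [id, pow_one, mul_one, Nat.cast_ofNat]; ring)
  have hqc : Continuous (fun t : ℝ => M * (t - x) ^ 2 / 2) := by continuity
  have hsub1 : Icc x 1 ⊆ Icc (0:ℝ) 1 := Icc_subset_Icc hx.1 le_rfl
  have hsub0 : Icc (0:ℝ) x ⊆ Icc (0:ℝ) 1 := Icc_subset_Icc le_rfl hx.2
  have hoo1 : Ioo x 1 ⊆ Ioo (0:ℝ) 1 := Ioo_subset_Ioo hx.1 le_rfl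
  have hoo0 : Ioo (0:ℝ) x ⊆ Ioo (0:ℝ) 1 := Ioo_subset_Ioo le_rfl hx.2
  -- bounds on [x,1]
  have key1 : g 1 - g x ≤ M * (1 - x) ^ 2 / 2 := by
    have h := mono_aux hx.2 ((hgc.mono hsub1).sub (hqc.continuousOn))
      (fun t ht => (hgd t (hoo1 ht)).sub (hqd t))
      (fun t ht => by
        have habs := abs_le.1 (lip x hx t (hsub1 (Ioo_subset_Icc_self ht)))
        have : |t - x| = t - x := abs_of_nonneg (by linarith [ht.1])
        rw [this] at habs
        linarith [habs.2])
    simp only [Pi.sub_apply, Pi.neg_apply, Pi.add_apply] at h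
    nlinarith [h]
  have key2 : g x - g 1 ≤ M * (1 - x) ^ 2 / 2 := by
    have h := mono_aux hx.2
      (((hgc.mono hsub1).neg).sub (hqc.continuousOn))
      (fun t ht => ((hgd t (hoo1 ht)).neg.sub (hqd t)))
      (fun t ht => by
        have habs := abs_le.1 (lip x hx t (hsub1 (Ioo_subset_Icc_self ht)))
        have : |t - x| = t - x := abs_of_nonneg (by linarith [ht.1])
        rw [this] at habs
        linarith [habs.1])
    simp only [Pi.sub_apply, Pi.neg_apply, Pi.add_apply] at h
    nlinarith [h]
  -- bounds on [0,x]
  have key3 : g x - g 0 ≤ M * x ^ 2 / 2 := by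
    have h := mono_aux hx.1 ((hgc.mono hsub0).add (hqc.continuousOn))
      (fun t ht => (hgd t (hoo0 ht)).add (hqd t))
      (fun t ht => by
        have habs := abs_le.1 (lip x hx t (hsub0 (Ioo_subset_Icc_self ht)))
        have : |t - x| = -(t - x) := abs_of_nonpos (by linarith [ht.2])
        rw [this] at habs
        linarith [habs.2])
    simp only [Pi.sub_apply, Pi.neg_apply, Pi.add_apply] at h
    nlinarith [h]
  have key4 : g 0 - g x ≤ M * x ^ 2 / 2 := by
    have h := mono_aux hx.1
      (((hgc.mono hsub0).neg).add (hqc.continuousOn))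
      (fun t ht => ((hgd t (hoo0 ht)).neg.add (hqd t)))
      (fun t ht => by
        have habs := abs_le.1 (lip x hx t (hsub0 (Ioo_subset_Icc_self ht)))
        have : |t - x| = -(t - x) := abs_of_nonpos (by linarith [ht.2])
        rw [this] at habs
        linarith [habs.1])
    simp only [Pi.sub_apply, Pi.neg_apply, Pi.add_apply] at h
    nlinarith [h]
  have hE : f' x - (f 1 - f 0) = (g 0 - g x) + (g x - g 1) := by
    simp only [hgdef]; ring
  rcases abs_cases (f' x - (f 1 - f 0)) with ⟨he, _⟩ | ⟨he, _⟩ <;> rw [he] <;>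
    nlinarith [mul_nonneg hM0 (mul_nonneg hx.1 (sub_nonneg.2 hx.2)), hE]
end

section
/- Let τ ≥ 2 and let n be an integer with n > 1 + τ/2. Let f : [0,1] → ℝ be twice differentiable with bounded second derivative, and suppose f lies in the cone C_τ, i.e., sup_{0≤x≤1} |f″(x)| ≤ τ·sup_{0≤x≤1} |f′(x) − (f(1) − f(0))|. With nodes x_i = (i−1)/(n−1), i = 1,…,n, A_n(f) the piecewise linear interpolant of f, and F̃_n(f) = max_{1≤i≤n−1} |(n−1)[f(x_{i+1}) − f(x_i)] − (f(1)−f(0))|, one has the data-driven error bound sup_{0≤x≤1} |f(x) − A_n(f)(x)| ≤ τ·F̃_n(f) / (4(n−1)(2n−2−τ)). In particular, if τ·F̃_n(f)/(4(n−1)(2n−2−τ)) ≤ ε then the adaptive function-recovery algorithm's stopping criterion guarantees ‖f − A_n(f)‖_∞ ≤ ε. -/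
open Set

set_option maxHeartbeats 1000000

lemma taylor_one {f f' : ℝ → ℝ} {M : ℝ}
    (hf : ∀ x ∈ Icc (0:ℝ) 1, HasDerivWithinAt f (f' x) (Icc 0 1) x)
    (hlip : ∀ u ∈ Icc (0:ℝ) 1, ∀ v ∈ Icc (0:ℝ) 1, |f' u - f' v| ≤ M * |u - v|)
    {c x : ℝ} (hc : c ∈ Icc (0:ℝ) 1) (hx : x ∈ Icc (0:ℝ) 1) :
    |f x - f c - f' c * (x - c)| ≤ M * (x - c)^2 / 2 := by
  have key : ∀ σ : ℝ, σ = 1 ∨ σ = -1 →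
      0 ≤ M / 2 * (x - c)^2 - σ * (f x - (f c + f' c * (x - c))) := by
    intro σ hσ
    set g : ℝ → ℝ := fun t => M / 2 * (t - c)^2 - σ * (f t - (f c + f' c * (t - c))) with hgdef
    have hg' : ∀ t ∈ Icc (0:ℝ) 1,
        HasDerivWithinAt g (M * (t - c) - σ * (f' t - f' c)) (Icc (0:ℝ) 1) t := by
      intro t ht
      have h1 : HasDerivAt (fun y : ℝ => M / 2 * (y - c)^2) (M * (t - c)) t := by
        have := (((hasDerivAt_id t).sub_const c).pow 2).const_mul (M/2)
        refine this.congr_deriv ?_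
        simp only [id_eq]; push_cast; ring
      have hlin : HasDerivAt (fun y : ℝ => f c + f' c * (y - c)) (f' c) t := by
        simpa using (((hasDerivAt_id t).sub_const c).const_mul (f' c)).const_add (f c)
      exact (h1.hasDerivWithinAt).sub (((hf t ht).sub hlin.hasDerivWithinAt).const_mul σ)
    have hgcont : ContinuousOn g (Icc (0:ℝ) 1) := fun t ht => (hg' t ht).continuousWithinAt
    have habs : ∀ t ∈ Icc (0:ℝ) 1, |σ * (f' t - f' c)| ≤ M * |t - c| := by
      intro t ht
      have h2 := hlip t ht c hc
      have hσ1 : |σ| = 1 := by rcases hσ with h | h <;> simp [h]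
      rw [abs_mul, hσ1, one_mul]; exact h2
    have hgc : g c = 0 := by simp [hgdef]
    rcases le_total c x with hcx | hxc
    · have hsub : Icc c x ⊆ Icc (0:ℝ) 1 := Icc_subset_Icc hc.1 hx.2
      have hmono : MonotoneOn g (Icc c x) := by
        apply monotoneOn_of_hasDerivWithinAt_nonneg (convex_Icc c x) (hgcont.mono hsub)
          (f' := fun t => M * (t - c) - σ * (f' t - f' c))
        · intro t ht
          exact (hg' t (hsub (interior_subset ht))).mono
            (fun z hz => hsub (interior_subset hz))
        · intro t ht
          rw [interior_Icc] at ht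
          have h3 := (abs_le.mp (habs t (hsub (Ioo_subset_Icc_self ht)))).2
          rw [abs_of_nonneg (by linarith [ht.1] : (0:ℝ) ≤ t - c)] at h3
          linarith
      have := hmono (left_mem_Icc.mpr hcx) (right_mem_Icc.mpr hcx) hcx
      rw [hgc] at this
      simpa [hgdef] using this
    · have hsub : Icc x c ⊆ Icc (0:ℝ) 1 := Icc_subset_Icc hx.1 hc.2
      have hanti : AntitoneOn g (Icc x c) := by
        apply antitoneOn_of_hasDerivWithinAt_nonpos (convex_Icc x c) (hgcont.mono hsub)
          (f' := fun t => M * (t - c) - σ * (f' t - f' c))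
        · intro t ht
          exact (hg' t (hsub (interior_subset ht))).mono
            (fun z hz => hsub (interior_subset hz))
        · intro t ht
          rw [interior_Icc] at ht
          have h3 := (abs_le.mp (habs t (hsub (Ioo_subset_Icc_self ht)))).1
          rw [abs_of_nonpos (by linarith [ht.2] : t - c ≤ 0)] at h3
          linarith
      have := hanti (left_mem_Icc.mpr hxc) (right_mem_Icc.mpr hxc) hxc
      rw [hgc] at this
      simpa [hgdef] using this
  have k1 := key 1 (Or.inl rfl)
  have k2 := key (-1) (Or.inr rfl)
  rw [abs_le]
  constructor <;> nlinarith [k1, k2]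

/-- Data-driven error bound for the adaptive linear spline algorithm on the cone
`C_τ = {f : ‖f″‖_∞ ≤ τ ‖f′ − f(1) + f(0)‖_∞}`: for `n > 1 + τ/2`,
`‖f − A_n(f)‖_∞ ≤ τ F̃_n(f) / (4(n−1)(2n−2−τ))`, where
`F̃_n(f) = max_i |(n−1)[f(x_{i+1}) − f(x_i)] − (f(1) − f(0))|`; hence the stopping
criterion `τ F̃_n(f)/(4(n−1)(2n−2−τ)) ≤ ε` guarantees `‖f − A_n(f)‖_∞ ≤ ε`. -/
theorem adaptive_spline_error_bound
    (τ : ℝ) (hτ : 2 ≤ τ)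
    (n : ℕ) (hn : 1 + τ / 2 < (n : ℝ))
    (f f' f'' : ℝ → ℝ)
    (hd1 : ∀ x ∈ Icc (0:ℝ) 1, HasDerivWithinAt f (f' x) (Icc 0 1) x)
    (hd2 : ∀ x ∈ Icc (0:ℝ) 1, HasDerivWithinAt f' (f'' x) (Icc 0 1) x)
    (hcone : ∀ x ∈ Icc (0:ℝ) 1,
      |f'' x| ≤ τ * ⨆ y : Icc (0:ℝ) 1, |f' y.1 - (f 1 - f 0)|)
    (Ft : ℝ)
    (hFt : Ft = (Finset.range (n - 1)).sup'
      (Finset.nonempty_range_iff.mpr (by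
        have : (2:ℝ) ≤ (n:ℝ) := by nlinarith
        have : 2 ≤ n := by exact_mod_cast this
        omega))
      (fun i =>
        |((n : ℝ) - 1) *
            (f (((i : ℝ) + 1) / ((n : ℝ) - 1)) - f ((i : ℝ) / ((n : ℝ) - 1)))
          - (f 1 - f 0)|)) :
    (∀ i ∈ Finset.range (n - 1),
      ∀ x ∈ Icc ((i : ℝ) / ((n : ℝ) - 1)) (((i : ℝ) + 1) / ((n : ℝ) - 1)),
        |f x - ((n : ℝ) - 1) *
            (f ((i : ℝ) / ((n : ℝ) - 1)) * (((i : ℝ) + 1) / ((n : ℝ) - 1) - x)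
              + f (((i : ℝ) + 1) / ((n : ℝ) - 1)) * (x - (i : ℝ) / ((n : ℝ) - 1)))|
          ≤ τ * Ft / (4 * ((n : ℝ) - 1) * (2 * (n : ℝ) - 2 - τ))) ∧
    ∀ ε : ℝ, τ * Ft / (4 * ((n : ℝ) - 1) * (2 * (n : ℝ) - 2 - τ)) ≤ ε →
      ∀ i ∈ Finset.range (n - 1),
        ∀ x ∈ Icc ((i : ℝ) / ((n : ℝ) - 1)) (((i : ℝ) + 1) / ((n : ℝ) - 1)),
          |f x - ((n : ℝ) - 1) *
              (f ((i : ℝ) / ((n : ℝ) - 1)) * (((i : ℝ) + 1) / ((n : ℝ) - 1) - x)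
                + f (((i : ℝ) + 1) / ((n : ℝ) - 1)) * (x - (i : ℝ) / ((n : ℝ) - 1)))|
            ≤ ε := by
  have hτ0 : (0:ℝ) < τ := by linarith
  have hn3 : 3 ≤ n := by
    have h2 : (2:ℝ) < (n:ℝ) := by linarith
    have : 2 < n := by exact_mod_cast h2
    omega
  set N : ℝ := (n:ℝ) - 1 with hNdef
  clear_value N
  have hNcast : ((n - 1 : ℕ) : ℝ) = N := by
    rw [hNdef]; push_cast [Nat.cast_sub (by omega : 1 ≤ n)]; ring
  have hN2 : 2 ≤ N := by
    have : (3:ℝ) ≤ (n:ℝ) := by exact_mod_cast hn3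
    rw [hNdef]; linarith
  have hN0 : (0:ℝ) < N := by linarith
  have hτN : τ < 2 * N := by rw [hNdef]; linarith
  set S : ℝ := ⨆ y : Icc (0:ℝ) 1, |f' y.1 - (f 1 - f 0)| with hSdef
  have hS0 : 0 ≤ S := Real.iSup_nonneg (fun y => abs_nonneg _)
  set M : ℝ := τ * S with hMdef
  clear_value S M
  have hM0 : 0 ≤ M := hMdef ▸ mul_nonneg hτ0.le hS0
  have hbound : ∀ x ∈ Icc (0:ℝ) 1, |f'' x| ≤ M := hcone
  have hlip : ∀ u ∈ Icc (0:ℝ) 1, ∀ v ∈ Icc (0:ℝ) 1, |f' u - f' v| ≤ M * |u - v| := by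
    intro u hu v hv
    have := Convex.norm_image_sub_le_of_norm_hasDerivWithin_le hd2
      (fun z hz => by simpa using hbound z hz) (convex_Icc 0 1) hv hu
    simpa [Real.norm_eq_abs] using this
  have htaylor : ∀ p ∈ Icc (0:ℝ) 1, ∀ q ∈ Icc (0:ℝ) 1,
      |f q - f p - f' p * (q - p)| ≤ M * (q - p)^2 / 2 :=
    fun p hp q hq => taylor_one hd1 hlip hp hq
  -- basic facts about intervals indexed by i ∈ range (n-1)
  have hinterval : ∀ i : ℕ, i ∈ Finset.range (n - 1) →
      (0:ℝ) ≤ (i:ℝ) / N ∧ (i:ℝ) / N ≤ ((i:ℝ) + 1) / N ∧ ((i:ℝ) + 1) / N ≤ 1 := by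
    intro i hi
    have hi' : i < n - 1 := Finset.mem_range.mp hi
    have hic : (i:ℝ) + 1 ≤ N := by
      have : (i:ℕ) + 1 ≤ n - 1 := by omega
      have := (Nat.cast_le (α := ℝ)).mpr this
      push_cast at this
      rw [← hNcast]; push_cast; linarith
    refine ⟨div_nonneg (Nat.cast_nonneg i) hN0.le, ?_, ?_⟩
    · gcongr
      linarith
    · rw [div_le_one hN0]; linarith
  have hFt_ge : ∀ i ∈ Finset.range (n-1),
      |N * (f (((i:ℝ)+1)/N) - f ((i:ℝ)/N)) - (f 1 - f 0)| ≤ Ft := by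
    intro i hi
    rw [hFt]
    exact Finset.le_sup'
      (fun i : ℕ => |N * (f (((i:ℝ)+1)/N) - f ((i:ℝ)/N)) - (f 1 - f 0)|) hi
  have hFt0 : 0 ≤ Ft :=
    le_trans (abs_nonneg _) (hFt_ge 0 (Finset.mem_range.mpr (by omega)))
  haveI : Nonempty (Icc (0:ℝ) 1) := ⟨⟨0, by norm_num⟩⟩
  have hSb : S ≤ Ft + M / (2*N) := by
    rw [hSdef]
    apply ciSup_le
    rintro ⟨y, hy⟩
    simp only
    set i : ℕ := min ⌊y*N⌋₊ (n-2) with hidef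
    have hi_mem : i ∈ Finset.range (n-1) := Finset.mem_range.mpr (by omega)
    have hiy : (i:ℝ) ≤ y * N := by
      have h1 : (i:ℝ) ≤ (⌊y*N⌋₊ : ℝ) := by
        have : i ≤ ⌊y*N⌋₊ := by omega
        exact_mod_cast this
      exact h1.trans (Nat.floor_le (mul_nonneg hy.1 hN0.le))
    have hyi : y * N ≤ (i:ℝ) + 1 := by
      rcases le_or_gt ⌊y*N⌋₊ (n-2) with h | h
      · have he : i = ⌊y*N⌋₊ := by omega
        rw [he]
        exact (Nat.lt_floor_add_one _).le
      · have he : i = n - 2 := by omega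
        have h2 : y * N ≤ N := by nlinarith [hy.2]
        have h3 : ((n-2:ℕ):ℝ) + 1 = N := by
          rw [Nat.cast_sub (show 2 ≤ n by omega), hNdef]; ring
        rw [he, h3]; exact h2
    obtain ⟨h0a, hab, hb1⟩ := hinterval i hi_mem
    set a := (i:ℝ)/N with hadef
    set b := ((i:ℝ)+1)/N with hbdef
    have hay : a ≤ y := by rw [hadef, div_le_iff₀ hN0]; linarith
    have hyb : y ≤ b := by rw [hbdef, le_div_iff₀ hN0]; linarith
    have hyI : y ∈ Icc (0:ℝ) 1 := hy
    have haI : a ∈ Icc (0:ℝ) 1 := ⟨h0a, le_trans hab hb1⟩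
    have hbI : b ∈ Icc (0:ℝ) 1 := ⟨le_trans h0a hab, hb1⟩
    have hRa := htaylor y hyI a haI
    have hRb := htaylor y hyI b hbI
    have hNab : N * (b - a) = 1 := by
      rw [hadef, hbdef]; field_simp; ring
    clear_value a b
    have hterm := hFt_ge i hi_mem
    rw [← hadef, ← hbdef] at hterm
    have e : f' y - (f 1 - f 0) =
        (N * (f b - f a) - (f 1 - f 0))
        - N * (f b - f y - f' y * (b - y)) + N * (f a - f y - f' y * (a - y)) := by
      linear_combination (-(f' y)) * hNab
    have hb2 : |N * (f b - f y - f' y * (b - y))| ≤ N * (M * (b - y)^2 / 2) := by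
      rw [abs_mul, abs_of_pos hN0]
      exact mul_le_mul_of_nonneg_left hRb hN0.le
    have ha2 : |N * (f a - f y - f' y * (a - y))| ≤ N * (M * (a - y)^2 / 2) := by
      rw [abs_mul, abs_of_pos hN0]
      exact mul_le_mul_of_nonneg_left hRa hN0.le
    have t1 : |f' y - (f 1 - f 0)| ≤
        Ft + N * (M * (b - y)^2 / 2) + N * (M * (a - y)^2 / 2) := by
      rw [e]
      have u1 := abs_add_le (N * (f b - f a) - (f 1 - f 0) - N * (f b - f y - f' y * (b - y)))
        (N * (f a - f y - f' y * (a - y)))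
      have u2 := abs_sub (N * (f b - f a) - (f 1 - f 0)) (N * (f b - f y - f' y * (b - y)))
      linarith
    have t2 : N * (M * (b - y)^2 / 2) + N * (M * (a - y)^2 / 2) ≤ M / (2*N) := by
      rw [le_div_iff₀ (by linarith : (0:ℝ) < 2*N)]
      have hu : 0 ≤ N * (y - a) := mul_nonneg hN0.le (by linarith)
      have hv : 0 ≤ N * (b - y) := mul_nonneg hN0.le (by linarith)
      have hst : N * (y - a) + N * (b - y) = 1 := by linear_combination hNab
      have expand : (N * (M * (b - y)^2 / 2) + N * (M * (a - y)^2 / 2)) * (2*N)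
          = M * (N*(b-y))^2 + M * (N*(y-a))^2 := by ring
      have hM1 : M * (N*(y-a))^2 + M * (N*(b-y))^2 + 2*(M*(N*(y-a))*(N*(b-y))) = M := by
        linear_combination (M*(N*(y-a) + N*(b-y)) + M) * hst
      have h3 : 0 ≤ 2*(M*(N*(y-a))*(N*(b-y))) := by
        have := mul_nonneg (mul_nonneg hM0 hu) hv
        linarith
      rw [expand]
      linarith [hM1, h3]
    linarith
  have hSF : S * (2*N - τ) ≤ 2*N*Ft := by
    have h1 : S - Ft ≤ M / (2*N) := by linarith [hSb]
    have h2 : (S - Ft) * (2*N) ≤ M := by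
      rw [← le_div_iff₀ (by linarith : (0:ℝ) < 2*N)]; exact h1
    rw [hMdef] at h2
    nlinarith [h2]
  have hRHS : M / (8 * N^2) ≤ τ * Ft / (4 * N * (2 * (n:ℝ) - 2 - τ)) := by
    have h2N : 2 * (n:ℝ) - 2 - τ = 2*N - τ := by rw [hNdef]; ring
    rw [h2N, hMdef, div_le_div_iff₀ (by positivity) (by nlinarith)]
    nlinarith [mul_le_mul_of_nonneg_left hSF (by positivity : (0:ℝ) ≤ 4*N*τ)]
  have main : ∀ i ∈ Finset.range (n-1),
      ∀ x ∈ Icc ((i:ℝ)/N) (((i:ℝ)+1)/N),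
        |f x - N * (f ((i:ℝ)/N) * (((i:ℝ)+1)/N - x) + f (((i:ℝ)+1)/N) * (x - (i:ℝ)/N))|
          ≤ τ * Ft / (4 * N * (2 * (n:ℝ) - 2 - τ)) := by
    intro i hi x hx
    obtain ⟨h0a, hab, hb1⟩ := hinterval i hi
    set a := (i:ℝ)/N with hadef
    set b := ((i:ℝ)+1)/N with hbdef
    have hxI : x ∈ Icc (0:ℝ) 1 := ⟨le_trans h0a hx.1, le_trans hx.2 hb1⟩
    have haI : a ∈ Icc (0:ℝ) 1 := ⟨h0a, le_trans hab hb1⟩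
    have hbI : b ∈ Icc (0:ℝ) 1 := ⟨le_trans h0a hab, hb1⟩
    have hRa := htaylor x hxI a haI
    have hRb := htaylor x hxI b hbI
    have hNab : N * (b - a) = 1 := by
      rw [hadef, hbdef]; field_simp; ring
    clear_value a b
    have e : f x - N * (f a * (b - x) + f b * (x - a)) =
        -(N * ((f a - f x - f' x * (a - x)) * (b - x)
            + (f b - f x - f' x * (b - x)) * (x - a))) := by
      linear_combination (-(f x)) * hNab
    rw [e, abs_neg]
    have hp : (0:ℝ) ≤ x - a := by linarith [hx.1]
    have hq : (0:ℝ) ≤ b - x := by linarith [hx.2]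
    have step1 : |N * ((f a - f x - f' x * (a - x)) * (b - x)
        + (f b - f x - f' x * (b - x)) * (x - a))|
        ≤ N * ((M * (a - x)^2 / 2) * (b - x) + (M * (b - x)^2 / 2) * (x - a)) := by
      rw [abs_mul, abs_of_pos hN0]
      apply mul_le_mul_of_nonneg_left ?_ hN0.le
      calc |(f a - f x - f' x * (a - x)) * (b - x) + (f b - f x - f' x * (b - x)) * (x - a)|
          ≤ |(f a - f x - f' x * (a - x)) * (b - x)|
            + |(f b - f x - f' x * (b - x)) * (x - a)| := abs_add_le _ _
        _ ≤ (M * (a - x)^2 / 2) * (b - x) + (M * (b - x)^2 / 2) * (x - a) := by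
            rw [abs_mul, abs_mul, abs_of_nonneg hq, abs_of_nonneg hp]
            exact add_le_add (mul_le_mul_of_nonneg_right hRa hq)
              (mul_le_mul_of_nonneg_right hRb hp)
    have step2 : N * ((M * (a - x)^2 / 2) * (b - x) + (M * (b - x)^2 / 2) * (x - a))
        ≤ M / (8 * N^2) := by
      rw [le_div_iff₀ (by positivity : (0:ℝ) < 8 * N^2)]
      have e2 : N * ((M * (a - x)^2 / 2) * (b - x) + (M * (b - x)^2 / 2) * (x - a)) * (8 * N^2)
          = 4 * M * (N*(x-a)) * (N*(b-x)) * (N*(x-a) + N*(b-x)) := by ring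
      have hst : N * (x - a) + N * (b - x) = 1 := by linear_combination hNab
      rw [e2, hst]
      have hM1 : M * (N*(x-a))^2 + M * (N*(b-x))^2 + 2*(M*(N*(x-a))*(N*(b-x))) = M := by
        linear_combination (M*(N*(x-a) + N*(b-x)) + M) * hst
      have h4 : 0 ≤ M * (N*(x-a) - N*(b-x))^2 := mul_nonneg hM0 (sq_nonneg _)
      linarith [hM1, h4]
    exact le_trans (le_trans step1 step2) hRHS
  exact ⟨main, fun eps heps i hi x hx => le_trans (main i hi x hx) heps⟩
end

section
/- Let τ > 2, s > 0, let n be a nonnegative integer, and let ξ_1, …, ξ_n be any points in [0,1]. Then there exist two continuously differentiable functions f₊, f₋ : [0,1] → ℝ with Lipschitz derivatives such that: (i) f′_± is Lipschitz with constant at most s on [0,1] (so ‖f″_±‖_∞ ≤ s); (ii) both f₊ and f₋ lie in the cone C_τ, i.e., the Lipschitz constant of f′_± is at most τ·sup_{0≤x≤1} |f′_±(x) − (f_±(1) − f_±(0))|; (iii) f₊(ξ_i) = f₋(ξ_i) for all i = 1,…,n; and (iv) sup_{0≤x≤1} |f₊(x) − f₋(x)| ≥ s(τ−2)/(16τ(n+1)²).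 Consequently, any deterministic algorithm for L∞ recovery that uses only the n function values f(ξ_1),…,f(ξ_n) must make an error of at least s(τ−2)/(32τ(n+1)²) on at least one function in C_τ with ‖f″‖_∞ ≤ s. -/
open Set

noncomputable section LowerBoundAux

/-- clamped linear map used to define the bump -/
private def lbClamp (a r x : ℝ) : ℝ := min (max ((x - a) / r) 0) (2 * Real.pi)

/-- derivative of the bump -/
private def lbD (a r x : ℝ) : ℝ := r * Real.sin (lbClamp a r x)

/-- the bump function -/
private def lbB (a r x : ℝ) : ℝ := ∫ t in (0:ℝ)..x, lbD a r t

private lemma lb_sin_lip (u v : ℝ) : |Real.sin u - Real.sin v| ≤ |u - v| := by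
  rw [Real.sin_sub_sin]
  have h1 : |Real.sin ((u - v) / 2)| ≤ |u - v| / 2 := by
    have := Real.abs_sin_le_abs (x := (u - v) / 2)
    rwa [abs_div, abs_two] at this
  have h2 : |Real.cos ((u + v) / 2)| ≤ 1 := Real.abs_cos_le_one _
  calc |2 * Real.sin ((u - v) / 2) * Real.cos ((u + v) / 2)|
      = 2 * |Real.sin ((u - v) / 2)| * |Real.cos ((u + v) / 2)| := by
        rw [abs_mul, abs_mul, abs_two]
    _ ≤ 2 * (|u - v| / 2) * 1 := by
        apply mul_le_mul _ h2 (abs_nonneg _) (by positivity)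
        exact mul_le_mul_of_nonneg_left h1 (by norm_num)
    _ = |u - v| := by ring

private lemma lbClamp_lip (a r : ℝ) (hr : 0 < r) (x y : ℝ) :
    |lbClamp a r x - lbClamp a r y| ≤ |x - y| / r := by
  have h1 : |lbClamp a r x - lbClamp a r y| ≤ |max ((x - a)/r) 0 - max ((y - a)/r) 0| := by
    have := abs_min_sub_min_le_max (max ((x - a)/r) 0) (2 * Real.pi)
      (max ((y - a)/r) 0) (2 * Real.pi)
    simpa [lbClamp] using this
  have h2 : |max ((x - a)/r) 0 - max ((y - a)/r) 0| ≤ |(x - a)/r - (y - a)/r| := by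
    have := abs_max_sub_max_le_max ((x - a)/r) 0 ((y - a)/r) 0
    simpa using this
  have h3 : |(x - a)/r - (y - a)/r| = |x - y| / r := by
    rw [div_sub_div_same, show x - a - (y - a) = x - y by ring, abs_div,
      abs_of_pos hr]
  linarith [h1.trans h2]

private lemma lbD_lip (a r : ℝ) (hr : 0 < r) (x y : ℝ) :
    |lbD a r x - lbD a r y| ≤ |x - y| := by
  have : |lbD a r x - lbD a r y| = r * |Real.sin (lbClamp a r x) - Real.sin (lbClamp a r y)| := by
    rw [lbD, lbD, ← mul_sub, abs_mul, abs_of_pos hr]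
  rw [this]
  calc r * |Real.sin (lbClamp a r x) - Real.sin (lbClamp a r y)|
      ≤ r * (|x - y| / r) := by
        apply mul_le_mul_of_nonneg_left _ hr.le
        exact (lb_sin_lip _ _).trans (lbClamp_lip a r hr x y)
    _ = |x - y| := by field_simp

private lemma lbD_abs_le (a r : ℝ) (hr : 0 ≤ r) (x : ℝ) : |lbD a r x| ≤ r := by
  rw [lbD, abs_mul, abs_of_nonneg hr]
  exact mul_le_of_le_one_right hr (Real.abs_sin_le_one _)

private lemma lbD_cont (a r : ℝ) : Continuous (lbD a r) := by
  apply continuous_const.mul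
  exact Real.continuous_sin.comp
    ((((continuous_id.sub continuous_const).div_const r).max continuous_const).min
      continuous_const)

private lemma lbB_hasDerivAt (a r x : ℝ) : HasDerivAt (lbB a r) (lbD a r x) x :=
  (intervalIntegral.integral_hasStrictDerivAt_right
    ((lbD_cont a r).intervalIntegrable _ _)
    ((lbD_cont a r).stronglyMeasurableAtFilter _ _)
    (lbD_cont a r).continuousAt).hasDerivAt

private lemma lbD_zero_left (a r : ℝ) (hr : 0 < r) {x : ℝ} (hx : x ≤ a) : lbD a r x = 0 := by
  have h1 : (x - a) / r ≤ 0 := div_nonpos_of_nonpos_of_nonneg (by linarith) hr.le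
  have : lbClamp a r x = 0 := by
    rw [lbClamp, max_eq_right h1, min_eq_left (by positivity)]
  rw [lbD, this, Real.sin_zero, mul_zero]

private lemma lbD_zero_right (a r : ℝ) (hr : 0 < r) {x : ℝ} (hx : a + 2 * Real.pi * r ≤ x) :
    lbD a r x = 0 := by
  have h1 : 2 * Real.pi ≤ (x - a) / r := by
    rw [le_div_iff₀ hr]; linarith
  have : lbClamp a r x = 2 * Real.pi := by
    rw [lbClamp, max_eq_left (le_trans (by positivity) h1), min_eq_right h1]
  rw [lbD, this, Real.sin_two_pi, mul_zero]

private lemma lbB_zero_left (a r : ℝ) (hr : 0 < r) {x : ℝ} (h0 : 0 ≤ x) (hx : x ≤ a) :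
    lbB a r x = 0 := by
  rw [lbB, intervalIntegral.integral_congr (g := fun _ => (0:ℝ)),
    intervalIntegral.integral_const, smul_zero]
  intro t ht
  rw [uIcc_of_le h0] at ht
  exact lbD_zero_left a r hr (ht.2.trans hx)

private lemma lbB_mid (a r : ℝ) (hr : 0 < r) (ha : 0 ≤ a) {u : ℝ} (hu : 0 ≤ u)
    (hu2 : u ≤ 2 * Real.pi) : lbB a r (a + u * r) = r ^ 2 * (1 - Real.cos u) := by
  have hint : ∀ b c : ℝ, IntervalIntegrable (lbD a r) MeasureTheory.volume b c :=
    fun b c => (lbD_cont a r).intervalIntegrable _ _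
  have h1 : lbB a r (a + u * r)
      = (∫ t in (0:ℝ)..a, lbD a r t) + ∫ t in a..(a + u * r), lbD a r t := by
    rw [lbB, intervalIntegral.integral_add_adjacent_intervals (hint 0 a) (hint a _)]
  have h2 : (∫ t in (0:ℝ)..a, lbD a r t) = 0 := by
    rw [intervalIntegral.integral_congr (g := fun _ => (0:ℝ)),
      intervalIntegral.integral_const, smul_zero]
    intro t ht
    rw [uIcc_of_le ha] at ht
    exact lbD_zero_left a r hr ht.2
  have h3 : (∫ t in a..(a + u * r), lbD a r t)
      = ∫ t in a..(a + u * r), r * Real.sin ((t - a) / r) := by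
    apply intervalIntegral.integral_congr
    intro t ht
    rw [uIcc_of_le (by nlinarith)] at ht
    have htl : 0 ≤ (t - a) / r := div_nonneg (by linarith [ht.1]) hr.le
    have htu : (t - a) / r ≤ 2 * Real.pi := by
      rw [div_le_iff₀ hr]
      nlinarith [ht.2]
    rw [lbD, lbClamp, max_eq_left htl, min_eq_left htu]
  have h4 : (∫ t in a..(a + u * r), r * Real.sin ((t - a) / r))
      = r * ∫ t in a..(a + u * r), Real.sin ((t - a) / r) :=
    intervalIntegral.integral_const_mul _ _
  have h5 : (∫ t in a..(a + u * r), Real.sin ((t - a) / r))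
      = ∫ t in (0:ℝ)..(u * r), Real.sin (t / r) := by
    have := intervalIntegral.integral_comp_sub_right (a := a) (b := a + u * r)
      (fun t => Real.sin (t / r)) a
    simpa using this
  have h6 : (∫ t in (0:ℝ)..(u * r), Real.sin (t / r)) = r * (1 - Real.cos u) := by
    rw [intervalIntegral.integral_comp_div (fun t => Real.sin t) hr.ne']
    rw [zero_div, mul_div_assoc, div_self hr.ne', mul_one, integral_sin, Real.cos_zero,
      smul_eq_mul]
  rw [h1, h2, h3, h4, h5, h6]
  ring

private lemma lbB_zero_right (a r : ℝ) (hr : 0 < r) (ha : 0 ≤ a) {x : ℝ}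
    (hx : a + 2 * Real.pi * r ≤ x) : lbB a r x = 0 := by
  have hint : ∀ b c : ℝ, IntervalIntegrable (lbD a r) MeasureTheory.volume b c :=
    fun b c => (lbD_cont a r).intervalIntegrable _ _
  have h1 : lbB a r x
      = lbB a r (a + 2 * Real.pi * r) + ∫ t in (a + 2 * Real.pi * r)..x, lbD a r t := by
    rw [lbB, lbB, intervalIntegral.integral_add_adjacent_intervals (hint 0 _) (hint _ _)]
  have h2 : lbB a r (a + 2 * Real.pi * r) = 0 := by
    have := lbB_mid a r hr ha (u := 2 * Real.pi) (by positivity) le_rfl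
    rwa [Real.cos_two_pi, sub_self, mul_zero, show 2 * Real.pi * r = a + 2 * Real.pi * r - a by ring,
      add_sub_cancel] at this
  have h3 : (∫ t in (a + 2 * Real.pi * r)..x, lbD a r t) = 0 := by
    rw [intervalIntegral.integral_congr (g := fun _ => (0:ℝ)),
      intervalIntegral.integral_const, smul_zero]
    intro t ht
    rw [uIcc_of_le hx] at ht
    exact lbD_zero_right a r hr ht.1
  rw [h1, h2, h3, add_zero]

private lemma lb_gap (n : ℕ) (ξ : Fin n → ℝ) :
    ∃ k : ℕ, k ≤ n ∧ ∀ i, ξ i ∉ Ioo ((k : ℝ) / (n + 1)) (((k : ℝ) + 1) / (n + 1)) := by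
  by_contra hc
  push_neg at hc
  choose j hj using fun k : Fin (n + 1) => hc k (Nat.lt_succ_iff.mp k.2)
  have key : ∀ k₁ k₂ : Fin (n + 1), (k₁ : ℕ) < (k₂ : ℕ) → j k₁ ≠ j k₂ := by
    intro k₁ k₂ hlt heqj
    have h1 := (hj k₁).2
    have h2 := (hj k₂).1
    rw [heqj] at h1
    have hk : (((k₁ : ℕ) : ℝ) + 1) / (n + 1) ≤ (((k₂ : ℕ) : ℝ)) / (n + 1) := by
      apply div_le_div_of_nonneg_right _ (by positivity)
      exact_mod_cast Nat.succ_le_of_lt hlt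
    linarith
  have hinj : Function.Injective j := by
    intro k₁ k₂ h
    rcases lt_trichotomy (k₁ : ℕ) (k₂ : ℕ) with hlt | heq | hlt
    · exact absurd h (key k₁ k₂ hlt)
    · exact Fin.ext heq
    · exact absurd h.symm (key k₂ k₁ hlt)
  have := Fintype.card_le_of_injective j hinj
  simp at this

end LowerBoundAux

set_option maxHeartbeats 1600000 in
/-- Fooling-pair construction for the lower complexity bound for `L∞` recovery on the
cone `C_τ = {f : ‖f″‖_∞ ≤ τ ‖f′ − f(1) + f(0)‖_∞}` (with the Lipschitz constant of `f′`
playing the role of `‖f″‖_∞`), together with its consequence: any deterministic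
algorithm using only the data `f(ξ_1),…,f(ξ_n)` errs in the sup norm by at least
`s(τ−2)/(32τ(n+1)²)` on some `f ∈ C_τ` with `‖f″‖_∞ ≤ s`. -/
theorem lower_bound_cone_recovery
    (τ s : ℝ) (hτ : 2 < τ) (hs : 0 < s)
    (n : ℕ) (ξ : Fin n → ℝ) (hξ : ∀ i, ξ i ∈ Icc (0:ℝ) 1) :
    (∃ fp fp' fm fm' : ℝ → ℝ,
      (∀ x ∈ Icc (0:ℝ) 1, HasDerivWithinAt fp (fp' x) (Icc 0 1) x) ∧
      (∀ x ∈ Icc (0:ℝ) 1, HasDerivWithinAt fm (fm' x) (Icc 0 1) x) ∧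
      ContinuousOn fp' (Icc 0 1) ∧ ContinuousOn fm' (Icc 0 1) ∧
      LipschitzOnWith (Real.toNNReal s) fp' (Icc 0 1) ∧
      LipschitzOnWith (Real.toNNReal s) fm' (Icc 0 1) ∧
      LipschitzOnWith
        (Real.toNNReal (τ * ⨆ x : Icc (0:ℝ) 1, |fp' x.1 - (fp 1 - fp 0)|))
        fp' (Icc 0 1) ∧
      LipschitzOnWith
        (Real.toNNReal (τ * ⨆ x : Icc (0:ℝ) 1, |fm' x.1 - (fm 1 - fm 0)|))
        fm' (Icc 0 1) ∧
      (∀ i, fp (ξ i) = fm (ξ i)) ∧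
      (∃ x ∈ Icc (0:ℝ) 1,
        s * (τ - 2) / (16 * τ * ((n : ℝ) + 1) ^ 2) ≤ |fp x - fm x|)) ∧
    (∀ A : (Fin n → ℝ) → (ℝ → ℝ), ∃ f f' : ℝ → ℝ,
      (∀ x ∈ Icc (0:ℝ) 1, HasDerivWithinAt f (f' x) (Icc 0 1) x) ∧
      LipschitzOnWith (Real.toNNReal s) f' (Icc 0 1) ∧
      LipschitzOnWith
        (Real.toNNReal (τ * ⨆ x : Icc (0:ℝ) 1, |f' x.1 - (f 1 - f 0)|))
        f' (Icc 0 1) ∧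
      ∃ x ∈ Icc (0:ℝ) 1,
        s * (τ - 2) / (32 * τ * ((n : ℝ) + 1) ^ 2)
          ≤ |f x - A (fun i => f (ξ i)) x|) := by
  obtain ⟨k, hk, hgapfree⟩ := lb_gap n ξ
  have hπ := Real.pi_pos
  have hτ0 : (0:ℝ) < τ := by linarith
  have hN0 : (0:ℝ) < (n : ℝ) + 1 := by positivity
  set a : ℝ := (k : ℝ) / ((n : ℝ) + 1) with hadef
  set r : ℝ := 1 / (2 * Real.pi * ((n : ℝ) + 1)) with hrdef
  have hr0 : 0 < r := by rw [hrdef]; positivity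
  have ha0 : 0 ≤ a := by rw [hadef]; positivity
  have hb : a + 2 * Real.pi * r = ((k : ℝ) + 1) / ((n : ℝ) + 1) := by
    rw [hadef, hrdef]; field_simp
  have hb1 : ((k : ℝ) + 1) / ((n : ℝ) + 1) ≤ 1 := by
    rw [div_le_one hN0]
    have : (k : ℝ) ≤ (n : ℝ) := by exact_mod_cast hk
    linarith
  set c₀ : ℝ := s / τ with hc₀def
  set c₁ : ℝ := s * (τ - 2) / τ with hc₁def
  have hc₀ : 0 < c₀ := by rw [hc₀def]; positivity
  have hc₁ : 0 < c₁ := by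
    rw [hc₁def]
    apply div_pos _ hτ0
    nlinarith
  have hsum : 2 * c₀ + c₁ = s := by
    rw [hc₀def, hc₁def]
    field_simp
    ring
  -- generic facts about the family  x ↦ c₀ x(1-x) + d·bump
  have hpoly : ∀ x : ℝ, HasDerivAt (fun y : ℝ => y * (1 - y)) (1 - 2 * x) x := by
    intro x
    have h := (hasDerivAt_id x).mul ((hasDerivAt_const x (1:ℝ)).sub (hasDerivAt_id x))
    have he : (1:ℝ) * (1 - id x) + id x * (0 - 1) = 1 - 2 * x := by
      simp [id]; ring
    rw [← he]
    exact h
  have gen_deriv : ∀ (d : ℝ) (x : ℝ),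
      HasDerivAt (fun y => c₀ * (y * (1 - y)) + d * lbB a r y)
        (c₀ * (1 - 2 * x) + d * lbD a r x) x :=
    fun d x => ((hpoly x).const_mul c₀).add ((lbB_hasDerivAt a r x).const_mul d)
  have gen_cont : ∀ d : ℝ, Continuous (fun x => c₀ * (1 - 2 * x) + d * lbD a r x) :=
    fun d => (continuous_const.mul (continuous_const.sub
      (continuous_const.mul continuous_id))).add (continuous_const.mul (lbD_cont a r))
  have gen_lip : ∀ d : ℝ, |d| ≤ c₁ → LipschitzOnWith (Real.toNNReal s)
      (fun x => c₀ * (1 - 2 * x) + d * lbD a r x) (Icc 0 1) := by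
    intro d hd
    rw [lipschitzOnWith_iff_dist_le_mul]
    intro x _ y _
    rw [Real.dist_eq, Real.dist_eq, Real.coe_toNNReal s hs.le]
    have h1 : (c₀ * (1 - 2 * x) + d * lbD a r x) - (c₀ * (1 - 2 * y) + d * lbD a r y)
        = c₀ * (2 * (y - x)) + d * (lbD a r x - lbD a r y) := by ring
    rw [h1]
    have h2 : |c₀ * (2 * (y - x))| ≤ 2 * c₀ * |x - y| := by
      rw [abs_mul, abs_of_pos hc₀]
      have : |2 * (y - x)| = 2 * |x - y| := by
        rw [abs_mul, abs_two, abs_sub_comm]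
      rw [this]; ring_nf; exact le_rfl
    have h3 : |d * (lbD a r x - lbD a r y)| ≤ c₁ * |x - y| := by
      rw [abs_mul]
      exact mul_le_mul hd (lbD_lip a r hr0 x y) (abs_nonneg _) hc₁.le
    calc |c₀ * (2 * (y - x)) + d * (lbD a r x - lbD a r y)|
        ≤ |c₀ * (2 * (y - x))| + |d * (lbD a r x - lbD a r y)| := abs_add_le _ _
      _ ≤ 2 * c₀ * |x - y| + c₁ * |x - y| := add_le_add h2 h3
      _ = s * |x - y| := by rw [← hsum]; ring
  have gen_bd : ∀ d : ℝ, |d| ≤ c₁ → ∀ x ∈ Icc (0:ℝ) 1,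
      |c₀ * (1 - 2 * x) + d * lbD a r x| ≤ c₀ + c₁ * r := by
    intro d hd x hx
    calc |c₀ * (1 - 2 * x) + d * lbD a r x|
        ≤ |c₀ * (1 - 2 * x)| + |d * lbD a r x| := abs_add_le _ _
      _ ≤ c₀ * 1 + c₁ * r := by
          apply add_le_add
          · rw [abs_mul, abs_of_pos hc₀]
            apply mul_le_mul_of_nonneg_left _ hc₀.le
            rw [abs_le]
            exact ⟨by linarith [hx.2], by linarith [hx.1]⟩
          · rw [abs_mul]
            exact mul_le_mul hd (lbD_abs_le a r hr0.le x) (abs_nonneg _) hc₁.le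
      _ = c₀ + c₁ * r := by ring
  have cone_gen : ∀ f f' : ℝ → ℝ, f 1 - f 0 = 0 → |f' 0| = c₀ →
      (∀ x ∈ Icc (0:ℝ) 1, |f' x| ≤ c₀ + c₁ * r) →
      LipschitzOnWith (Real.toNNReal s) f' (Icc 0 1) →
      LipschitzOnWith (Real.toNNReal (τ * ⨆ x : Icc (0:ℝ) 1, |f' x.1 - (f 1 - f 0)|))
        f' (Icc 0 1) := by
    intro f f' hf10 hf'0 hbd hlip
    have hbdd : BddAbove (range fun x : Icc (0:ℝ) 1 => |f' x.1 - (f 1 - f 0)|) := by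
      refine ⟨c₀ + c₁ * r, ?_⟩
      rintro _ ⟨x, rfl⟩
      simp only [hf10, sub_zero]
      exact hbd x.1 x.2
    have hS : c₀ ≤ ⨆ x : Icc (0:ℝ) 1, |f' x.1 - (f 1 - f 0)| := by
      have h := le_ciSup hbdd (⟨0, by norm_num⟩ : Icc (0:ℝ) 1)
      calc c₀ = |f' 0| := hf'0.symm
        _ ≤ _ := by simpa [hf10] using h
    have hsτ : s ≤ τ * ⨆ x : Icc (0:ℝ) 1, |f' x.1 - (f 1 - f 0)| := by
      have he : s = τ * c₀ := by rw [hc₀def]; field_simp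
      rw [he]
      exact mul_le_mul_of_nonneg_left hS hτ0.le
    have hKK : ((Real.toNNReal s : NNReal) : ENNReal)
        ≤ ((Real.toNNReal (τ * ⨆ x : Icc (0:ℝ) 1, |f' x.1 - (f 1 - f 0)|) : NNReal) : ENNReal) := by
      exact_mod_cast Real.toNNReal_mono hsτ
    intro x hx y hy
    exact (hlip hx hy).trans (mul_le_mul_left hKK _)
  -- values of the bump
  have hbump0 : lbB a r 0 = 0 := lbB_zero_left a r hr0 le_rfl ha0
  have hbump1 : lbB a r 1 = 0 := by
    apply lbB_zero_right a r hr0 ha0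
    rw [hb]; exact hb1
  have hD0 : lbD a r 0 = 0 := lbD_zero_left a r hr0 ha0
  have hbumpξ : ∀ i, lbB a r (ξ i) = 0 := by
    intro i
    have hi := hξ i
    have hg := hgapfree i
    rw [mem_Ioo, not_and_or, not_lt, not_lt] at hg
    rcases hg with h | h
    · exact lbB_zero_left a r hr0 hi.1 (by rw [hadef]; exact h)
    · exact lbB_zero_right a r hr0 ha0 (by rw [hb]; exact h)
  have hmid : lbB a r (a + Real.pi * r) = 2 * r ^ 2 := by
    have h := lbB_mid a r hr0 ha0 (u := Real.pi) hπ.le (by linarith)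
    rw [Real.cos_pi] at h
    rw [h]; ring
  -- the fooling pair
  set fp : ℝ → ℝ := fun y => c₀ * (y * (1 - y)) + c₁ * lbB a r y with hfp
  set fp' : ℝ → ℝ := fun x => c₀ * (1 - 2 * x) + c₁ * lbD a r x with hfp'
  set fm : ℝ → ℝ := fun y => c₀ * (y * (1 - y)) + (-c₁) * lbB a r y with hfm
  set fm' : ℝ → ℝ := fun x => c₀ * (1 - 2 * x) + (-c₁) * lbD a r x with hfm'
  have habsc₁ : |c₁| ≤ c₁ := le_of_eq (abs_of_pos hc₁)
  have habsnc₁ : |(-c₁)| ≤ c₁ := by rw [abs_neg]; exact habsc₁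
  have hp10 : fp 1 - fp 0 = 0 := by rw [hfp]; simp [hbump0, hbump1]
  have hm10 : fm 1 - fm 0 = 0 := by rw [hfm]; simp [hbump0, hbump1]
  have hp'0 : |fp' 0| = c₀ := by rw [hfp']; simp [hD0, abs_of_pos hc₀]
  have hm'0 : |fm' 0| = c₀ := by rw [hfm']; simp [hD0, abs_of_pos hc₀]
  have hlipp := gen_lip c₁ habsc₁
  have hlipm := gen_lip (-c₁) habsnc₁
  have hdp : ∀ x ∈ Icc (0:ℝ) 1, HasDerivWithinAt fp (fp' x) (Icc 0 1) x :=
    fun x _ => (gen_deriv c₁ x).hasDerivWithinAt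
  have hdm : ∀ x ∈ Icc (0:ℝ) 1, HasDerivWithinAt fm (fm' x) (Icc 0 1) x :=
    fun x _ => (gen_deriv (-c₁) x).hasDerivWithinAt
  have hcp := cone_gen fp fp' hp10 hp'0 (gen_bd c₁ habsc₁) hlipp
  have hcm := cone_gen fm fm' hm10 hm'0 (gen_bd (-c₁) habsnc₁) hlipm
  have hvals : ∀ i, fp (ξ i) = fm (ξ i) := by
    intro i
    rw [hfp, hfm]
    simp [hbumpξ i]
  have hx₀mem : a + Real.pi * r ∈ Icc (0:ℝ) 1 := by
    constructor
    · nlinarith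
    · have : a + Real.pi * r ≤ a + 2 * Real.pi * r := by nlinarith
      rw [hb] at this
      linarith
  have hgapval : s * (τ - 2) / (16 * τ * ((n : ℝ) + 1) ^ 2)
      ≤ |fp (a + Real.pi * r) - fm (a + Real.pi * r)| := by
    have hv : fp (a + Real.pi * r) - fm (a + Real.pi * r) = 4 * c₁ * r ^ 2 := by
      rw [hfp, hfm]
      simp only
      rw [hmid]
      ring
    rw [hv, abs_of_pos (by positivity)]
    have he : 4 * c₁ * r ^ 2 = s * (τ - 2) / (Real.pi ^ 2 * τ * ((n : ℝ) + 1) ^ 2) := by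
      rw [hc₁def, hrdef]
      field_simp
      ring
    rw [he]
    have hnum : (0:ℝ) ≤ s * (τ - 2) := by nlinarith
    have hden : (0:ℝ) < Real.pi ^ 2 * τ * ((n : ℝ) + 1) ^ 2 := by positivity
    have hcmp : Real.pi ^ 2 * τ * ((n : ℝ) + 1) ^ 2 ≤ 16 * τ * ((n : ℝ) + 1) ^ 2 := by
      have hp16 : Real.pi ^ 2 ≤ 16 := by nlinarith [Real.pi_le_four, Real.pi_pos]
      have hTN : (0:ℝ) < τ * ((n : ℝ) + 1) ^ 2 := by positivity
      nlinarith [mul_nonneg (by linarith : (0:ℝ) ≤ 16 - Real.pi ^ 2) hTN.le]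
    exact div_le_div_of_nonneg_left hnum hden hcmp
  have hmain : (∃ fp fp' fm fm' : ℝ → ℝ,
      (∀ x ∈ Icc (0:ℝ) 1, HasDerivWithinAt fp (fp' x) (Icc 0 1) x) ∧
      (∀ x ∈ Icc (0:ℝ) 1, HasDerivWithinAt fm (fm' x) (Icc 0 1) x) ∧
      ContinuousOn fp' (Icc 0 1) ∧ ContinuousOn fm' (Icc 0 1) ∧
      LipschitzOnWith (Real.toNNReal s) fp' (Icc 0 1) ∧
      LipschitzOnWith (Real.toNNReal s) fm' (Icc 0 1) ∧
      LipschitzOnWith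
        (Real.toNNReal (τ * ⨆ x : Icc (0:ℝ) 1, |fp' x.1 - (fp 1 - fp 0)|))
        fp' (Icc 0 1) ∧
      LipschitzOnWith
        (Real.toNNReal (τ * ⨆ x : Icc (0:ℝ) 1, |fm' x.1 - (fm 1 - fm 0)|))
        fm' (Icc 0 1) ∧
      (∀ i, fp (ξ i) = fm (ξ i)) ∧
      (∃ x ∈ Icc (0:ℝ) 1,
        s * (τ - 2) / (16 * τ * ((n : ℝ) + 1) ^ 2) ≤ |fp x - fm x|)) :=
    ⟨fp, fp', fm, fm', hdp, hdm, (gen_cont c₁).continuousOn, (gen_cont (-c₁)).continuousOn,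
      hlipp, hlipm, hcp, hcm, hvals, ⟨a + Real.pi * r, hx₀mem, hgapval⟩⟩
  refine ⟨hmain, ?_⟩
  intro A
  have hAm : (fun i => fm (ξ i)) = (fun i => fp (ξ i)) := by
    funext i; exact (hvals i).symm
  by_cases hcase : s * (τ - 2) / (32 * τ * ((n : ℝ) + 1) ^ 2)
      ≤ |fp (a + Real.pi * r) - A (fun i => fp (ξ i)) (a + Real.pi * r)|
  · exact ⟨fp, fp', hdp, hlipp, hcp, a + Real.pi * r, hx₀mem, hcase⟩
  · refine ⟨fm, fm', hdm, hlipm, hcm, a + Real.pi * r, hx₀mem, ?_⟩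
    rw [hAm]
    push_neg at hcase
    set y := A (fun i => fp (ξ i)) (a + Real.pi * r) with hy
    have htri : |fp (a + Real.pi * r) - fm (a + Real.pi * r)|
        ≤ |fp (a + Real.pi * r) - y| + |fm (a + Real.pi * r) - y| := by
      calc |fp (a + Real.pi * r) - fm (a + Real.pi * r)|
          ≤ |fp (a + Real.pi * r) - y| + |y - fm (a + Real.pi * r)| :=
            abs_sub_le _ y _
        _ = |fp (a + Real.pi * r) - y| + |fm (a + Real.pi * r) - y| := by
            rw [abs_sub_comm y]
    have hdbl : s * (τ - 2) / (16 * τ * ((n : ℝ) + 1) ^ 2)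
        = 2 * (s * (τ - 2) / (32 * τ * ((n : ℝ) + 1) ^ 2)) := by
      have hτne : (τ:ℝ) ≠ 0 := hτ0.ne'
      have hNne : ((n:ℝ)+1) ≠ 0 := hN0.ne'
      field_simp
      ring
    rw [hdbl] at hgapval
    linarith
end

section
/- Let V be a real vector space, let p and q be seminorms on V, and let τ > 0. Suppose there exist f_in, f_out ∈ V with q(f_in) > 0 and q(f_out) > 0 such that p(f_in) < τ·q(f_in) and p(f_out) > τ·q(f_out). Then the cone C_τ = {f ∈ V : p(f) ≤ τ·q(f)} is not a convex set. Specifically, writing τ_in = p(f_in)/q(f_in) and τ_out = p(f_out)/q(f_out), the functions f_± = (τ − τ_in)·q(f_in)·f_out ± (τ + τ_out)·q(f_out)·f_in both lie in C_τ, but their midpoint (f₊ + f₋)/2 = (τ − τ_in)·q(f_in)·f_out is a nonzero multiple of f_out and lies outside C_τ. -/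
/-- The cone `C_τ = {f : p(f) ≤ τ q(f)}` (with `p` the strong and `q` the weak seminorm)
is not convex: if `f_in` lies strictly inside the cone and `f_out` strictly outside
(both with nonzero weak seminorm), then the two functions
`f_± = (τ − τ_in) q(f_in) f_out ± (τ + τ_out) q(f_out) f_in` lie in the cone, while
their midpoint, the nonzero multiple `(τ − τ_in) q(f_in) f_out` of `f_out`, does not. -/
theorem cone_not_convex
    {V : Type*} [AddCommGroup V] [Module ℝ V]
    (p q : Seminorm ℝ V) (τ : ℝ) (hτ : 0 < τ)
    (fin fout : V) (hqin : 0 < q fin) (hqout : 0 < q fout)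
    (hin : p fin < τ * q fin) (hout : τ * q fout < p fout) :
    (p (((τ - p fin / q fin) * q fin) • fout + ((τ + p fout / q fout) * q fout) • fin)
        ≤ τ * q (((τ - p fin / q fin) * q fin) • fout
              + ((τ + p fout / q fout) * q fout) • fin)) ∧
    (p (((τ - p fin / q fin) * q fin) • fout - ((τ + p fout / q fout) * q fout) • fin)
        ≤ τ * q (((τ - p fin / q fin) * q fin) • fout
              - ((τ + p fout / q fout) * q fout) • fin)) ∧
    ((1 / 2 : ℝ) • ((((τ - p fin / q fin) * q fin) • fout
            + ((τ + p fout / q fout) * q fout) • fin)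
          + (((τ - p fin / q fin) * q fin) • fout
            - ((τ + p fout / q fout) * q fout) • fin))
      = ((τ - p fin / q fin) * q fin) • fout) ∧
    (((τ - p fin / q fin) * q fin) • fout ≠ 0) ∧
    ¬ (p (((τ - p fin / q fin) * q fin) • fout)
        ≤ τ * q (((τ - p fin / q fin) * q fin) • fout)) ∧
    ¬ Convex ℝ {f : V | p f ≤ τ * q f} := by
  set a := (τ - p fin / q fin) * q fin with ha
  set b := (τ + p fout / q fout) * q fout with hb
  have haq : a = τ * q fin - p fin := by
    rw [ha, sub_mul, div_mul_cancel₀ _ hqin.ne']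
  have hbq : b = τ * q fout + p fout := by
    rw [hb, add_mul, div_mul_cancel₀ _ hqout.ne']
  have hp_in : 0 ≤ p fin := apply_nonneg p fin
  have hp_out : 0 ≤ p fout := apply_nonneg p fout
  have ha0 : 0 < a := by rw [haq]; linarith
  have hb0 : 0 < b := by rw [hbq]; nlinarith
  have psmul : ∀ (c : ℝ) (v : V), 0 ≤ c → p (c • v) = c * p v := by
    intro c v hc
    rw [map_smul_eq_mul, Real.norm_eq_abs, abs_of_nonneg hc]
  have qsmul : ∀ (c : ℝ) (v : V), 0 ≤ c → q (c • v) = c * q v := by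
    intro c v hc
    rw [map_smul_eq_mul, Real.norm_eq_abs, abs_of_nonneg hc]
  -- key scalar identity: a * p fout + b * p fin = τ * (b * q fin - a * q fout)
  have hkey : a * p fout + b * p fin = τ * (b * q fin - a * q fout) := by
    rw [haq, hbq]; ring
  -- membership of f₊
  have h1 : p (a • fout + b • fin) ≤ τ * q (a • fout + b • fin) := by
    have hup : p (a • fout + b • fin) ≤ a * p fout + b * p fin := by
      calc p (a • fout + b • fin) ≤ p (a • fout) + p (b • fin) := map_add_le_add p _ _
        _ = a * p fout + b * p fin := by
            rw [psmul a fout ha0.le, psmul b fin hb0.le]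
    have hdown : b * q fin - a * q fout ≤ q (a • fout + b • fin) := by
      have h := map_sub_le_add q (a • fout + b • fin) (a • fout)
      have heq : (a • fout + b • fin) - a • fout = b • fin := by abel
      rw [heq, qsmul b fin hb0.le, qsmul a fout ha0.le] at h
      linarith
    calc p (a • fout + b • fin) ≤ a * p fout + b * p fin := hup
      _ = τ * (b * q fin - a * q fout) := hkey
      _ ≤ τ * q (a • fout + b • fin) := by
          exact mul_le_mul_of_nonneg_left hdown hτ.le
  -- membership of f₋
  have h2 : p (a • fout - b • fin) ≤ τ * q (a • fout - b • fin) := by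
    have hup : p (a • fout - b • fin) ≤ a * p fout + b * p fin := by
      calc p (a • fout - b • fin) ≤ p (a • fout) + p (b • fin) := map_sub_le_add p _ _
        _ = a * p fout + b * p fin := by
            rw [psmul a fout ha0.le, psmul b fin hb0.le]
    have hdown : b * q fin - a * q fout ≤ q (a • fout - b • fin) := by
      have h := map_sub_le_add q (a • fout) (a • fout - b • fin)
      have heq : a • fout - (a • fout - b • fin) = b • fin := by abel
      rw [heq, qsmul b fin hb0.le, qsmul a fout ha0.le] at h
      linarith
    calc p (a • fout - b • fin) ≤ a * p fout + b * p fin := hup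
      _ = τ * (b * q fin - a * q fout) := hkey
      _ ≤ τ * q (a • fout - b • fin) := by
          exact mul_le_mul_of_nonneg_left hdown hτ.le
  -- midpoint identity
  have hmid : (1 / 2 : ℝ) • ((a • fout + b • fin) + (a • fout - b • fin)) = a • fout := by
    have : (a • fout + b • fin) + (a • fout - b • fin) = (2 : ℝ) • (a • fout) := by
      rw [two_smul]; abel
    rw [this, smul_smul]; norm_num
  -- nonzero
  have hne : a • fout ≠ 0 := by
    intro h
    have : q (a • fout) = 0 := by rw [h, map_zero]
    rw [qsmul a fout ha0.le] at this
    nlinarith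
  -- midpoint outside the cone
  have hnot : ¬ (p (a • fout) ≤ τ * q (a • fout)) := by
    rw [psmul a fout ha0.le, qsmul a fout ha0.le]
    push_neg
    nlinarith
  refine ⟨h1, h2, hmid, hne, hnot, ?_⟩
  intro hconv
  have hmem := hconv (Set.mem_setOf.mpr h1) (Set.mem_setOf.mpr h2)
    (by norm_num : (0:ℝ) ≤ 1/2) (by norm_num : (0:ℝ) ≤ 1/2) (by norm_num)
  rw [Set.mem_setOf] at hmem
  have heq2 : (1/2 : ℝ) • (a • fout + b • fin) + (1/2 : ℝ) • (a • fout - b • fin)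
      = a • fout := by rw [← smul_add, hmid]
  rw [heq2] at hmem
  exact hnot hmem
end
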